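/- arXiv:0901.4715 — 7 statements merged into one kernel-verified Lean document; each statement's English description precedes it below -/
import Mathlib

section
/- Suppose θ ∈ Θ and θ ≠ 0, and let ψ̃(x) be the function defined by the same formula ψ̃(x) = (1/2)xᵀx − Σ_{u∈U} (θ_u/π²) Π_{j=1}^m cos(π u_j x_j) on all of ℝ^m. Then ψ̃ is strictly convex on ℝ^m. -/
open Real

/-- The potential function ψ(x|θ) of the structural gradient model, defined by the same
formula on all of ℝ^m. -/
noncomputable def sgmPotential (m : ℕ) (U : Finset (Fin m → ℕ)) (θ : U → ℝ)
    (x : Fin m → ℝ) : ℝ :=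
  (1 / 2) * ∑ j, x j ^ 2 -
    ∑ u : U, (θ u / Real.pi ^ 2) * ∏ j, Real.cos (Real.pi * ((u : Fin m → ℕ) j : ℝ) * x j)

/-- The Hessian matrix D²f(x). -/
noncomputable def hessian (m : ℕ) (f : (Fin m → ℝ) → ℝ) (x : Fin m → ℝ) :
    Matrix (Fin m) (Fin m) ℝ :=
  Matrix.of fun i j => fderiv ℝ (fun y => fderiv ℝ f y (Pi.single j 1)) x (Pi.single i 1)

section Aux

variable {m : ℕ} {f : (Fin m → ℝ) → ℝ}

theorem fderiv_apply_clm (hf : ContDiff ℝ 2 f) (w : Fin m → ℝ) :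
    ContDiff ℝ 1 (fun y => fderiv ℝ f y w) :=
  (ContinuousLinearMap.apply ℝ ℝ w).contDiff.comp (hf.fderiv_right (le_refl _))

theorem line_hasDerivAt (x v : Fin m → ℝ) (t : ℝ) :
    HasDerivAt (fun t : ℝ => x + t • v) v t := by
  simpa using ((hasDerivAt_id t).smul_const v).const_add x

theorem comp_line_hasDerivAt {g : (Fin m → ℝ) → ℝ} (hg : Differentiable ℝ g)
    (x v : Fin m → ℝ) (t : ℝ) :
    HasDerivAt (fun s : ℝ => g (x + s • v)) (fderiv ℝ g (x + t • v) v) t :=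
  (hg _).hasFDerivAt.comp_hasDerivAt t (line_hasDerivAt x v t)

theorem fderiv_expand {g : (Fin m → ℝ) → ℝ} (y v : Fin m → ℝ) :
    fderiv ℝ g y v = ∑ j, v j * fderiv ℝ g y (Pi.single j 1) := by
  have hv : v = ∑ j, v j • (Pi.single j 1 : Fin m → ℝ) := by
    funext i
    simp [Finset.sum_apply, Pi.single_apply, Finset.sum_ite_eq', mul_comm]
  conv_lhs => rw [hv]
  rw [map_sum]
  simp [smul_eq_mul]

theorem second_deriv_line (hf : ContDiff ℝ 2 f) (x v : Fin m → ℝ) (t : ℝ) :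
    deriv (deriv (fun s : ℝ => f (x + s • v))) t
      = ∑ i, ∑ j, v i * v j *
          fderiv ℝ (fun y => fderiv ℝ f y (Pi.single j 1)) (x + t • v) (Pi.single i 1) := by
  have hdiff : Differentiable ℝ f := hf.differentiable (by norm_num)
  have h1 : deriv (fun s : ℝ => f (x + s • v)) = fun s => fderiv ℝ f (x + s • v) v :=
    funext fun s => (comp_line_hasDerivAt hdiff x v s).deriv
  rw [h1]
  have hg : Differentiable ℝ (fun y => fderiv ℝ f y v) :=
    (fderiv_apply_clm hf v).differentiable one_ne_zero
  rw [(comp_line_hasDerivAt hg x v t).deriv]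
  have hF : ∀ j : Fin m, DifferentiableAt ℝ (fun y => fderiv ℝ f y (Pi.single j 1)) (x + t • v) :=
    fun j => ((fderiv_apply_clm hf _).differentiable one_ne_zero) _
  have hgeq : (fun y => fderiv ℝ f y v)
      = fun y => ∑ j, v j * fderiv ℝ f y (Pi.single j 1) :=
    funext fun y => fderiv_expand y v
  rw [hgeq]
  have hsum : fderiv ℝ (fun y => ∑ j, v j * fderiv ℝ f y (Pi.single j 1)) (x + t • v)
      = ∑ j, v j • fderiv ℝ (fun y => fderiv ℝ f y (Pi.single j 1)) (x + t • v) := by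
    rw [fderiv_fun_sum (fun j _ => (hF j).const_mul (v j))]
    exact Finset.sum_congr rfl fun j _ => fderiv_const_mul (hF j) (v j)
  rw [hsum]
  rw [ContinuousLinearMap.sum_apply]
  simp only [ContinuousLinearMap.smul_apply, smul_eq_mul]
  have step : ∑ j, v j * (fderiv ℝ (fun y => fderiv ℝ f y (Pi.single j 1)) (x + t • v)) v
      = ∑ j, ∑ i, v j * (v i *
        fderiv ℝ (fun y => fderiv ℝ f y (Pi.single j 1)) (x + t • v) (Pi.single i 1)) := by
    refine Finset.sum_congr rfl fun j _ => ?_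
    rw [fderiv_expand, Finset.mul_sum]
  rw [step, Finset.sum_comm]
  exact Finset.sum_congr rfl fun i _ => Finset.sum_congr rfl fun j _ => by ring

end Aux

theorem analyticAt_realCos (x : ℝ) : AnalyticAt ℝ Real.cos x := by
  have hg : AnalyticAt ℝ (fun t : ℝ => Complex.cos ((t:ℂ))) x :=
    AnalyticAt.comp (Complex.differentiable_cos.analyticAt _).restrictScalars
      (Complex.ofRealCLM.analyticAt x)
  have h1 : AnalyticAt ℝ (fun t : ℝ => (Complex.cos (t:ℂ)).re) x :=
    (Complex.reCLM.analyticAt _).comp hg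
  have : (fun t : ℝ => (Complex.cos (t:ℂ)).re) = Real.cos := by
    funext t; rw [← Complex.ofReal_cos]; rfl
  rwa [this] at h1

theorem sgm_contDiff (m : ℕ) (U : Finset (Fin m → ℕ)) (θ : U → ℝ) :
    ContDiff ℝ 2 (sgmPotential m U θ) := by
  unfold sgmPotential
  apply ContDiff.sub
  · exact contDiff_const.mul (ContDiff.sum fun j _ => (contDiff_apply ℝ ℝ j).pow 2)
  · exact ContDiff.sum fun u _ => contDiff_const.mul <|
      contDiff_prod fun j _ => Real.contDiff_cos.comp (contDiff_const.mul (contDiff_apply ℝ ℝ j))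

theorem sgm_line_analytic (m : ℕ) (U : Finset (Fin m → ℕ)) (θ : U → ℝ)
    (x v : Fin m → ℝ) :
    AnalyticOnNhd ℝ (fun t : ℝ => sgmPotential m U θ (x + t • v)) Set.univ := by
  have key : ∀ j : Fin m, AnalyticOnNhd ℝ (fun t : ℝ => x j + t * v j) Set.univ :=
    fun j => analyticOnNhd_const.add (analyticOnNhd_id.mul analyticOnNhd_const)
  unfold sgmPotential
  simp only [Pi.add_apply, Pi.smul_apply, smul_eq_mul]
  apply AnalyticOnNhd.sub
  · exact analyticOnNhd_const.mul (Finset.analyticOnNhd_fun_sum _ fun j _ => (key j).pow 2)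
  · refine Finset.analyticOnNhd_fun_sum _ fun u _ => analyticOnNhd_const.mul ?_
    refine Finset.analyticOnNhd_fun_prod _ fun j _ => ?_
    exact fun t ht => (analyticAt_realCos _).comp ((analyticOnNhd_const.mul (key j)) t ht)

theorem sgm_symm (m : ℕ) (U : Finset (Fin m → ℕ)) (θ : U → ℝ)
    (a : Fin m → ℝ) (ha : ∀ j, a j = 1 ∨ a j = -1) (n : Fin m → ℤ) (y : Fin m → ℝ) :
    sgmPotential m U θ (fun j => a j * y j + 2 * n j)
      = sgmPotential m U θ y + ((∑ j, (2 * a j * n j) * y j) + ∑ j, 2 * (n j:ℝ)^2) := by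
  unfold sgmPotential
  have hcos : ∀ (u : Fin m → ℕ) (j : Fin m),
      Real.cos (Real.pi * (u j : ℝ) * (a j * y j + 2 * n j))
        = Real.cos (Real.pi * (u j : ℝ) * y j) := by
    intro u j
    have harg : Real.pi * (u j : ℝ) * (a j * y j + 2 * n j)
        = a j * (Real.pi * (u j : ℝ) * y j) + ((u j : ℤ) * n j : ℤ) * (2 * Real.pi) := by
      push_cast; ring
    rw [harg, Real.cos_add_int_mul_two_pi]
    rcases ha j with h | h <;> rw [h]
    · rw [one_mul]
    · rw [neg_one_mul, Real.cos_neg]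
  have hsq : ∀ j, (1:ℝ)/2 * (a j * y j + 2 * n j)^2
      = 1/2 * y j ^ 2 + ((2 * a j * n j) * y j + 2 * (n j:ℝ)^2) := by
    intro j
    rcases ha j with h | h <;> rw [h] <;> ring
  have h1 : (1:ℝ)/2 * ∑ j, (a j * y j + 2 * n j)^2
      = 1/2 * ∑ j, y j ^ 2 + ((∑ j, (2 * a j * n j) * y j) + ∑ j, 2 * (n j:ℝ)^2) := by
    rw [Finset.mul_sum, Finset.mul_sum]
    rw [Finset.sum_congr rfl fun j _ => hsq j]
    rw [Finset.sum_add_distrib, Finset.sum_add_distrib]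
  have h2 : ∀ u : U, (θ u / Real.pi ^ 2) * ∏ j, Real.cos (Real.pi * ((u : Fin m → ℕ) j : ℝ) * (a j * y j + 2 * n j))
      = (θ u / Real.pi ^ 2) * ∏ j, Real.cos (Real.pi * ((u : Fin m → ℕ) j : ℝ) * y j) := by
    intro u; congr 1; exact Finset.prod_congr rfl fun j _ => hcos u j
  rw [h1, Finset.sum_congr rfl fun u _ => h2 u]
  ring

section Symm

variable (m : ℕ) (U : Finset (Fin m → ℕ)) (θ : U → ℝ)
  (a : Fin m → ℝ) (n : Fin m → ℤ)

/-- The diagonal linear map `w ↦ (a j * w j)_j`. -/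
noncomputable def diagCLM : (Fin m → ℝ) →L[ℝ] (Fin m → ℝ) :=
  ContinuousLinearMap.pi (fun j => a j • ContinuousLinearMap.proj j)

theorem diagCLM_apply (w : Fin m → ℝ) : diagCLM m a w = fun j => a j * w j := by
  funext i
  simp [diagCLM, ContinuousLinearMap.pi_apply, smul_eq_mul]

theorem diagCLM_single (j : Fin m) :
    diagCLM m a (Pi.single j 1) = a j • (Pi.single j 1 : Fin m → ℝ) := by
  rw [diagCLM_apply]
  funext i
  rcases eq_or_ne i j with h | h
  · subst h; simp
  · simp [Pi.single_apply, h]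

theorem sigma_hasFDerivAt (y : Fin m → ℝ) :
    HasFDerivAt (fun z : Fin m → ℝ => (fun j => a j * z j + 2 * (n j : ℝ)))
      (diagCLM m a) y := by
  have : (fun z : Fin m → ℝ => (fun j => a j * z j + 2 * (n j : ℝ)))
      = fun z => diagCLM m a z + (fun j => 2 * (n j : ℝ)) := by
    funext z; rw [diagCLM_apply]; rfl
  rw [this]
  exact (diagCLM m a).hasFDerivAt.add_const _

/-- The linear part of the affine correction. -/
noncomputable def corrCLM : (Fin m → ℝ) →L[ℝ] ℝ :=
  ∑ j, (2 * a j * (n j : ℝ)) • (ContinuousLinearMap.proj j : (Fin m → ℝ) →L[ℝ] ℝ)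

theorem corrCLM_apply (z : Fin m → ℝ) : corrCLM m a n z = ∑ j, (2 * a j * n j) * z j := by
  simp [corrCLM, ContinuousLinearMap.sum_apply, smul_eq_mul]

theorem corrCLM_single (j : Fin m) : corrCLM m a n (Pi.single j 1) = 2 * a j * n j := by
  rw [corrCLM_apply]
  simp only [Pi.single_apply, mul_ite, mul_one, mul_zero]
  rw [Finset.sum_ite_eq' Finset.univ j fun k => 2 * a k * (n k : ℝ)]
  simp

theorem fderiv_single_symm (ha : ∀ j, a j = 1 ∨ a j = -1) (y : Fin m → ℝ) (j : Fin m) :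
    a j * fderiv ℝ (sgmPotential m U θ) (fun k => a k * y k + 2 * n k) (Pi.single j 1)
      = fderiv ℝ (sgmPotential m U θ) y (Pi.single j 1) + 2 * a j * n j := by
  set ψ := sgmPotential m U θ with hψdef
  have hψ : ContDiff ℝ 2 ψ := sgm_contDiff m U θ
  have hd : Differentiable ℝ ψ := hψ.differentiable (by norm_num)
  have H1 : HasFDerivAt (fun z : Fin m → ℝ => ψ (fun k => a k * z k + 2 * n k))
      ((fderiv ℝ ψ (fun k => a k * y k + 2 * n k)).comp (diagCLM m a)) y :=
    (hd _).hasFDerivAt.comp y (sigma_hasFDerivAt m a n y)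
  have heq : (fun z : Fin m → ℝ => ψ (fun k => a k * z k + 2 * n k))
      = fun z => ψ z + (corrCLM m a n z + ∑ k, 2 * (n k : ℝ)^2) := by
    funext z
    rw [corrCLM_apply, hψdef, sgm_symm m U θ a ha n z]
  rw [heq] at H1
  have H2 : HasFDerivAt (fun z : Fin m → ℝ => ψ z + (corrCLM m a n z + ∑ k, 2 * (n k : ℝ)^2))
      (fderiv ℝ ψ y + corrCLM m a n) y :=
    (hd y).hasFDerivAt.add ((corrCLM m a n).hasFDerivAt.add_const _)
  have huniq := H1.unique H2
  have := congrFun (congrArg (fun (L : (Fin m → ℝ) →L[ℝ] ℝ) => (L : (Fin m → ℝ) → ℝ)) huniq)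
    (Pi.single j 1)
  simp only [ContinuousLinearMap.coe_comp', Function.comp_apply, ContinuousLinearMap.add_apply] at this
  rw [diagCLM_single, map_smul, smul_eq_mul, corrCLM_single] at this
  exact this

theorem hessian_symm (ha : ∀ j, a j = 1 ∨ a j = -1) (y : Fin m → ℝ) (i j : Fin m) :
    hessian m (sgmPotential m U θ) (fun k => a k * y k + 2 * n k) i j
      = a i * a j * hessian m (sgmPotential m U θ) y i j := by
  set ψ := sgmPotential m U θ with hψdef
  have hψ : ContDiff ℝ 2 ψ := sgm_contDiff m U θ
  set F : (Fin m → ℝ) → ℝ := fun z => fderiv ℝ ψ z (Pi.single j 1) with hFdef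
  have hFd : Differentiable ℝ F := (fderiv_apply_clm hψ _).differentiable one_ne_zero
  have heq : (fun z : Fin m → ℝ => a j * F (fun k => a k * z k + 2 * n k))
      = fun z => F z + 2 * a j * n j := by
    funext z
    exact fderiv_single_symm m U θ a n ha z j
  have H1 : HasFDerivAt (fun z : Fin m → ℝ => a j * F (fun k => a k * z k + 2 * n k))
      (a j • ((fderiv ℝ F (fun k => a k * y k + 2 * n k)).comp (diagCLM m a))) y :=
    (((hFd _).hasFDerivAt.comp y (sigma_hasFDerivAt m a n y)).const_mul (a j))
  rw [heq] at H1
  have H2 : HasFDerivAt (fun z : Fin m → ℝ => F z + 2 * a j * n j)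
      (fderiv ℝ F y) y := (hFd y).hasFDerivAt.add_const _
  have huniq := H1.unique H2
  have happ := congrFun (congrArg (fun (L : (Fin m → ℝ) →L[ℝ] ℝ) => (L : (Fin m → ℝ) → ℝ)) huniq)
    (Pi.single i 1)
  simp only [ContinuousLinearMap.coe_smul', Pi.smul_apply, ContinuousLinearMap.coe_comp',
    Function.comp_apply, smul_eq_mul] at happ
  rw [diagCLM_single, map_smul, smul_eq_mul] at happ
  have hai : a i * a i = 1 := by rcases ha i with h | h <;> rw [h] <;> norm_num
  have haj : a j * a j = 1 := by rcases ha j with h | h <;> rw [h] <;> norm_num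
  show fderiv ℝ (fun z => fderiv ℝ ψ z (Pi.single j 1)) (fun k => a k * y k + 2 * n k) (Pi.single i 1)
      = a i * a j * fderiv ℝ (fun z => fderiv ℝ ψ z (Pi.single j 1)) y (Pi.single i 1)
  set X := fderiv ℝ F (fun k => a k * y k + 2 * n k) (Pi.single i 1) with hX
  set Y := fderiv ℝ F y (Pi.single i 1) with hY
  calc X = (a i * a i) * ((a j * a j) * X) := by rw [hai, haj]; ring
    _ = a i * a j * (a j * (a i * X)) := by ring
    _ = a i * a j * Y := by rw [happ]

end Symm

theorem hessian_psd_everywhere (m : ℕ) (U : Finset (Fin m → ℕ)) (θ : U → ℝ)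
    (hθ : ∀ x ∈ Set.Icc (0 : Fin m → ℝ) 1, (hessian m (sgmPotential m U θ) x).PosSemidef)
    (x : Fin m → ℝ) : (hessian m (sgmPotential m U θ) x).PosSemidef := by
  set ψ := sgmPotential m U θ with hψdef
  set nn : Fin m → ℤ := fun j => round (x j / 2) with hnn
  set r : Fin m → ℝ := fun j => x j - 2 * nn j with hr
  set aa : Fin m → ℝ := fun j => if 0 ≤ r j then (1:ℝ) else -1 with haadef
  have haa : ∀ j, aa j = 1 ∨ aa j = -1 := by
    intro j; by_cases h : 0 ≤ r j
    · left; simp [haadef, h]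
    · right; simp [haadef, h]
  set y : Fin m → ℝ := fun j => aa j * r j with hy
  have hrabs : ∀ j, |r j| ≤ 1 := by
    intro j
    have h := abs_sub_round (x j / 2)
    have : r j = 2 * (x j / 2 - round (x j / 2)) := by rw [hr]; push_cast; ring
    rw [this, abs_mul]
    rw [abs_of_nonneg (by norm_num : (0:ℝ) ≤ 2)]
    linarith
  have hyabs : ∀ j, y j = |r j| := by
    intro j
    by_cases h : 0 ≤ r j
    · rw [hy, haadef]; simp [h, abs_of_nonneg h]
    · rw [hy, haadef]; simp [h, abs_of_neg (lt_of_not_ge h)]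
  have hymem : y ∈ Set.Icc (0 : Fin m → ℝ) 1 := by
    constructor
    · intro j; rw [hyabs j]; exact abs_nonneg _
    · intro j; rw [hyabs j]; exact hrabs j
  have hxeq : x = fun j => aa j * y j + 2 * nn j := by
    funext j
    have h2 : aa j * aa j = 1 := by rcases haa j with h | h <;> rw [h] <;> norm_num
    rw [hy]
    calc x j = (aa j * aa j) * r j + 2 * nn j := by rw [h2, hr]; ring
      _ = aa j * (aa j * r j) + 2 * nn j := by ring
  have hrel : ∀ i j, hessian m ψ x i j = aa i * aa j * hessian m ψ y i j := by
    intro i j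
    conv_lhs => rw [hxeq]
    exact hessian_symm m U θ aa nn haa y i j
  have hPSD := hθ y hymem
  refine Matrix.PosSemidef.of_dotProduct_mulVec_nonneg ?_ ?_
  · apply Matrix.IsHermitian.ext
    intro i j
    rw [star_trivial, hrel i j, hrel j i]
    have := hPSD.1.apply i j
    rw [star_trivial] at this
    rw [this]; ring
  · intro w
    have hkey := hPSD.dotProduct_mulVec_nonneg (fun i => aa i * w i)
    simp only [dotProduct, Matrix.mulVec, star_trivial, Pi.star_apply] at hkey ⊢
    have heqsum : (∑ i, w i * ∑ j, hessian m ψ x i j * w j)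
        = ∑ i, (aa i * w i) * ∑ j, hessian m ψ y i j * (aa j * w j) := by
      refine Finset.sum_congr rfl fun i _ => ?_
      rw [Finset.mul_sum, Finset.mul_sum]
      refine Finset.sum_congr rfl fun j _ => ?_
      rw [hrel i j]; ring
    rw [heqsum]
    exact hkey

theorem sgm_lower (m : ℕ) (U : Finset (Fin m → ℕ)) (θ : U → ℝ) (z : Fin m → ℝ) :
    (1/2) * ∑ j, z j ^ 2 - (∑ u : U, |θ u| / Real.pi ^ 2) ≤ sgmPotential m U θ z := by
  unfold sgmPotential
  have hb : |∑ u : U, (θ u / Real.pi ^ 2) * ∏ j, Real.cos (Real.pi * ((u : Fin m → ℕ) j : ℝ) * z j)|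
      ≤ ∑ u : U, |θ u| / Real.pi ^ 2 := by
    refine le_trans (Finset.abs_sum_le_sum_abs _ _) ?_
    refine Finset.sum_le_sum fun u _ => ?_
    rw [abs_mul, abs_div]
    have h1 : |∏ j, Real.cos (Real.pi * ((u : Fin m → ℕ) j : ℝ) * z j)| ≤ 1 := by
      rw [Finset.abs_prod]
      exact Finset.prod_le_one (fun j _ => abs_nonneg _) (fun j _ => Real.abs_cos_le_one _)
    have h2 : |Real.pi ^ 2| = Real.pi ^ 2 := abs_of_pos (by positivity)
    rw [h2]
    calc |θ u| / Real.pi ^ 2 * |∏ j, Real.cos (Real.pi * ((u : Fin m → ℕ) j : ℝ) * z j)|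
        ≤ |θ u| / Real.pi ^ 2 * 1 := by
          apply mul_le_mul_of_nonneg_left h1 (by positivity)
      _ = |θ u| / Real.pi ^ 2 := mul_one _
  have := le_abs_self (∑ u : U, (θ u / Real.pi ^ 2) * ∏ j, Real.cos (Real.pi * ((u : Fin m → ℕ) j : ℝ) * z j))
  linarith

theorem sgm_line_strictMono (m : ℕ) (U : Finset (Fin m → ℕ)) (θ : U → ℝ)
    (hθ : ∀ x ∈ Set.Icc (0 : Fin m → ℝ) 1, (hessian m (sgmPotential m U θ) x).PosSemidef)
    (x v : Fin m → ℝ) (hv : v ≠ 0) :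
    StrictMono (deriv (fun t : ℝ => sgmPotential m U θ (x + t • v))) := by
  set ψ := sgmPotential m U θ with hψdef
  have hψ : ContDiff ℝ 2 ψ := sgm_contDiff m U θ
  have hd : Differentiable ℝ ψ := hψ.differentiable (by norm_num)
  set g : ℝ → ℝ := fun t => fderiv ℝ ψ (x + t • v) v with hgdef
  have hgderiv : deriv (fun t : ℝ => ψ (x + t • v)) = g :=
    funext fun s => (comp_line_hasDerivAt hd x v s).deriv
  rw [hgderiv]
  have hline : Differentiable ℝ (fun t : ℝ => x + t • v) :=
    (differentiable_id.smul_const v).const_add x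
  have hgdiff : Differentiable ℝ g :=
    ((fderiv_apply_clm hψ v).differentiable one_ne_zero).comp hline
  have hQnonneg : ∀ t, 0 ≤ deriv g t := by
    intro t
    have h2 : deriv g t = ∑ i, ∑ j, v i * v j * hessian m ψ (x + t • v) i j := by
      rw [← hgderiv]
      exact second_deriv_line hψ x v t
    have hPSD := hessian_psd_everywhere m U θ hθ (x + t • v)
    have hq := hPSD.dotProduct_mulVec_nonneg v
    simp only [dotProduct, Matrix.mulVec, star_trivial, Pi.star_apply] at hq
    rw [h2]
    calc (0:ℝ) ≤ ∑ i, v i * ∑ j, hessian m ψ (x + t • v) i j * v j := hq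
      _ = ∑ i, ∑ j, v i * v j * hessian m ψ (x + t • v) i j := by
          refine Finset.sum_congr rfl fun i _ => ?_
          rw [Finset.mul_sum]
          exact Finset.sum_congr rfl fun j _ => by ring
  have hmono : Monotone g := monotone_of_deriv_nonneg hgdiff hQnonneg
  -- strictness
  intro s t hst
  by_contra hle
  push_neg at hle
  have heq : g s = g t := le_antisymm (hmono hst.le) hle
  have hconst : ∀ r ∈ Set.Icc s t, g r = g s :=
    fun r hr => le_antisymm (heq ▸ hmono hr.2) (hmono hr.1)
  set t₀ := (s + t) / 2 with ht₀def
  have ht₀ : t₀ ∈ Set.Ioo s t := ⟨by linarith, by linarith⟩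
  have hev : g =ᶠ[nhds t₀] fun _ => g s := by
    filter_upwards [isOpen_Ioo.mem_nhds ht₀] with r hr
    exact hconst r ⟨hr.1.le, hr.2.le⟩
  have hderivev : deriv g =ᶠ[nhds t₀] (0 : ℝ → ℝ) := by
    have := hev.deriv
    exact (by simpa [deriv_const] using this : deriv g =ᶠ[nhds t₀] fun _ => (0:ℝ))
  have hanalytic : AnalyticOnNhd ℝ (deriv g) Set.univ := by
    rw [← hgderiv]
    exact ((sgm_line_analytic m U θ x v).deriv).deriv
  have hzero : ∀ r, deriv g r = 0 := fun r =>
    hanalytic.eqOn_zero_of_preconnected_of_eventuallyEq_zero isPreconnected_univ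
      (Set.mem_univ t₀) hderivev (Set.mem_univ r)
  have hgconst : ∀ r, g r = g 0 := fun r => is_const_of_deriv_eq_zero hgdiff hzero r 0
  -- φ is affine
  set φ : ℝ → ℝ := fun t => ψ (x + t • v) with hφdef
  have hφHasDeriv : ∀ r : ℝ, HasDerivAt φ (g r) r := fun r => comp_line_hasDerivAt hd x v r
  have hwHasDeriv : ∀ r : ℝ, HasDerivAt (fun r => φ r - g 0 * r) 0 r := by
    intro r
    have := (hφHasDeriv r).sub ((hasDerivAt_id r).const_mul (g 0))
    have h0 : g r - g 0 * 1 = 0 := by rw [hgconst r]; ring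
    rw [h0] at this
    exact this
  have hwdiff : Differentiable ℝ (fun r => φ r - g 0 * r) :=
    fun r => (hwHasDeriv r).differentiableAt
  have hwzero : ∀ r, deriv (fun r => φ r - g 0 * r) r = 0 := fun r => (hwHasDeriv r).deriv
  have hφaffine : ∀ r, φ r = φ 0 + g 0 * r := by
    intro r
    have := is_const_of_deriv_eq_zero hwdiff hwzero r 0
    simp at this
    linarith [this]
  -- growth contradiction
  set C := ∑ u : U, |θ u| / Real.pi ^ 2 with hC
  have hC0 : 0 ≤ C := Finset.sum_nonneg fun u _ => by positivity
  set A := ∑ j, v j ^ 2 with hA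
  have hA0 : 0 < A := by
    obtain ⟨j, hj⟩ := Function.ne_iff.mp hv
    exact Finset.sum_pos' (fun j _ => sq_nonneg _) ⟨j, Finset.mem_univ j, by simpa using sq_pos_of_ne_zero hj⟩
  set B := ∑ j, x j * v j with hB
  set D := ∑ j, x j ^ 2 with hD
  have hexp : ∀ T : ℝ, ∑ j, (x j + T * v j) ^ 2 = D + 2 * T * B + T ^ 2 * A := by
    intro T
    rw [hD, hB, hA, Finset.mul_sum, Finset.mul_sum, ← Finset.sum_add_distrib,
      ← Finset.sum_add_distrib]
    exact Finset.sum_congr rfl fun j _ => by ring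
  have hgrowth : ∀ T : ℝ, (1/2) * (D + 2 * T * B + T ^ 2 * A) - C ≤ φ 0 + g 0 * T := by
    intro T
    have h1 := sgm_lower m U θ (x + T • v)
    have h2 : ∑ j, (x + T • v) j ^ 2 = D + 2 * T * B + T ^ 2 * A := by
      rw [← hexp T]
      exact Finset.sum_congr rfl fun j _ => by simp
    rw [h2] at h1
    calc (1/2) * (D + 2 * T * B + T ^ 2 * A) - C ≤ ψ (x + T • v) := h1
      _ = φ T := rfl
      _ = φ 0 + g 0 * T := hφaffine T
  set K := |B| + |g 0| + |φ 0| + C + |D| + 1 with hK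
  have hK1 : 1 ≤ K := by
    have h1 : 0 ≤ |B| := abs_nonneg _
    have h2 : 0 ≤ |g 0| := abs_nonneg _
    have h3 : 0 ≤ |φ 0| := abs_nonneg _
    have h4 : 0 ≤ |D| := abs_nonneg _
    linarith
  set T := max 1 (2 * K / A) with hT
  have hT1 : 1 ≤ T := le_max_left _ _
  have hAT : 2 * K ≤ A * T := by
    have := le_max_right 1 (2 * K / A)
    calc 2 * K = A * (2 * K / A) := by field_simp
      _ ≤ A * T := by
        apply mul_le_mul_of_nonneg_left (le_max_right _ _) hA0.le
  have hfinal := hgrowth T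
  have hB1 : -|B| ≤ B := neg_abs_le _
  have hg1 : g 0 ≤ |g 0| := le_abs_self _
  have hφ1 : φ 0 ≤ |φ 0| := le_abs_self _
  have hD1 : -|D| ≤ D := neg_abs_le _
  have hTpos : (0:ℝ) < T := lt_of_lt_of_le zero_lt_one hT1
  have f1 : T * -|B| ≤ T * B := mul_le_mul_of_nonneg_left hB1 hTpos.le
  have f2 : T * g 0 ≤ T * |g 0| := mul_le_mul_of_nonneg_left hg1 hTpos.le
  have f3 : T * (2 * K) ≤ T * (A * T) := mul_le_mul_of_nonneg_left hAT hTpos.le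
  have f4 : |φ 0| ≤ T * |φ 0| := le_mul_of_one_le_left (abs_nonneg _) hT1
  have f5 : C ≤ T * C := le_mul_of_one_le_left hC0 hT1
  have f6 : |D| ≤ T * |D| := le_mul_of_one_le_left (abs_nonneg _) hT1
  have hTK : T * (2 * K) = 2*(T*|B|) + 2*(T*|g 0|) + 2*(T*|φ 0|) + 2*(T*C) + 2*(T*|D|) + 2*T := by
    rw [hK]; ring
  rw [hTK] at f3
  clear_value T K C A B D
  nlinarith [hfinal, f1, f2, f3, f4, f5, f6, hφ1, hD1, hK1, hTpos, abs_nonneg D, abs_nonneg B, abs_nonneg (g 0), abs_nonneg (φ 0)]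

/-- If θ is feasible and θ ≠ 0, then the extended potential ψ̃ is strictly convex on ℝ^m. -/
theorem sgm_potential_strictConvex (m : ℕ) (hm : 0 < m) (U : Finset (Fin m → ℕ))
    (θ : U → ℝ) (hθ0 : θ ≠ 0)
    (hθ : ∀ x ∈ Set.Icc (0 : Fin m → ℝ) 1,
      (hessian m (sgmPotential m U θ) x).PosSemidef) :
    StrictConvexOn ℝ (Set.univ : Set (Fin m → ℝ)) (sgmPotential m U θ) := by
  refine ⟨convex_univ, ?_⟩
  intro x _ y _ hxy a b ha hb hab
  have hvne : y - x ≠ 0 := sub_ne_zero.mpr (Ne.symm hxy)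
  have hφsc : StrictConvexOn ℝ Set.univ (fun t : ℝ => sgmPotential m U θ (x + t • (y - x))) :=
    StrictMono.strictConvexOn_univ_of_deriv
      ((sgm_contDiff m U θ).continuous.comp
        (continuous_const.add (continuous_id.smul continuous_const)))
      (sgm_line_strictMono m U θ hθ x (y - x) hvne)
  have hkey := hφsc.2 (Set.mem_univ (0:ℝ)) (Set.mem_univ (1:ℝ)) (by norm_num) ha hb hab
  have hb' : a • (0:ℝ) + b • (1:ℝ) = b := by simp [smul_eq_mul]
  rw [hb'] at hkey
  have e0 : x + (0:ℝ) • (y - x) = x := by simp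
  have e1 : x + (1:ℝ) • (y - x) = y := by simp
  have eb : x + b • (y - x) = a • x + b • y := by
    have hab' : a = 1 - b := by linarith
    rw [hab']
    funext j
    simp only [Pi.add_apply, Pi.smul_apply, Pi.sub_apply, smul_eq_mul]
    ring
  simp only [e0, e1, eb] at hkey
  exact hkey
end

section
/- For any u ∈ U and any x ∈ [0,1]^m, the partial derivative of log p(x|θ) = log det D²ψ(x|θ) with respect to θ_u, evaluated at θ = 0, equals ‖u‖² Π_{j=1}^m cos(π u_j x_j). -/
open Real Finset

/-- The density p(x|θ) = det D²ψ(x|θ). -/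
noncomputable def sgmDensity (m : ℕ) (U : Finset (Fin m → ℕ)) (θ : U → ℝ)
    (x : Fin m → ℝ) : ℝ :=
  (hessian m (sgmPotential m U θ) x).det



/-- coordinate factor functions: sin at the distinguished index `j`, cos elsewhere -/
noncomputable def sgmF {m : ℕ} (u : Fin m → ℕ) (j k : Fin m) : ℝ → ℝ :=
  if k = j then (fun t => Real.sin (Real.pi * (u k : ℝ) * t))
  else (fun t => Real.cos (Real.pi * (u k : ℝ) * t))

noncomputable def sgmF' {m : ℕ} (u : Fin m → ℕ) (j k : Fin m) : ℝ → ℝ :=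
  if k = j then (fun t => Real.cos (Real.pi * (u k : ℝ) * t) * (Real.pi * (u k : ℝ)))
  else (fun t => -Real.sin (Real.pi * (u k : ℝ) * t) * (Real.pi * (u k : ℝ)))

lemma hasDerivAt_cos_mul (a t : ℝ) :
    HasDerivAt (fun s => Real.cos (a * s)) (-Real.sin (a * t) * a) t := by
  simpa [Function.comp_def] using (Real.hasDerivAt_cos (a * t)).comp t ((hasDerivAt_id t).const_mul a)

lemma hasDerivAt_sin_mul (a t : ℝ) :
    HasDerivAt (fun s => Real.sin (a * s)) (Real.cos (a * t) * a) t := by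
  simpa [Function.comp_def] using (Real.hasDerivAt_sin (a * t)).comp t ((hasDerivAt_id t).const_mul a)

lemma sgmF_hasDerivAt {m : ℕ} (u : Fin m → ℕ) (j k : Fin m) (t : ℝ) :
    HasDerivAt (sgmF u j k) (sgmF' u j k t) t := by
  unfold sgmF sgmF'
  split
  · exact hasDerivAt_sin_mul _ t
  · exact hasDerivAt_cos_mul _ t

/-- derivative of a product of coordinatewise functions -/
lemma sgm_prod_hasFDerivAt {m : ℕ} (h h' : Fin m → ℝ → ℝ)
    (H : ∀ k t, HasDerivAt (h k) (h' k t) t) (y : Fin m → ℝ) :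
    HasFDerivAt (fun z : Fin m → ℝ => ∏ k, h k (z k))
      (∑ k, (∏ j ∈ Finset.univ.erase k, h j (y j)) •
        ((h' k (y k)) • (ContinuousLinearMap.proj k : (Fin m → ℝ) →L[ℝ] ℝ))) y := by
  exact HasFDerivAt.finset_prod fun k _ =>
    (H k (y k)).comp_hasFDerivAt y (hasFDerivAt_apply k y)

lemma eval2 {m : ℕ} (a b : Fin m → ℝ) (i : Fin m) :
    (∑ k, a k • (b k • (ContinuousLinearMap.proj k : (Fin m → ℝ) →L[ℝ] ℝ)))
      (Pi.single i 1) = a i * b i := by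
  rw [ContinuousLinearMap.sum_apply]
  rw [Finset.sum_eq_single i]
  · simp
  · intro k _ hk
    simp [Pi.single_eq_of_ne' hk.symm]  -- check direction
  · simp

/-- the first partial derivative function -/
noncomputable def sgmG (m : ℕ) (U : Finset (Fin m → ℕ)) (θ : U → ℝ) (j : Fin m)
    (y : Fin m → ℝ) : ℝ :=
  y j + ∑ u : U, (θ u / Real.pi ^ 2) *
    ((Real.pi * ((u : Fin m → ℕ) j : ℝ)) * ∏ k, sgmF (u : Fin m → ℕ) j k (y k))

lemma sgm_potential_hasFDerivAt (m : ℕ) (U : Finset (Fin m → ℕ)) (θ : U → ℝ)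
    (y : Fin m → ℝ) :
    HasFDerivAt (sgmPotential m U θ)
      (((1:ℝ)/2) • (∑ k, (((2:ℕ):ℝ) * y k ^ 1) • (ContinuousLinearMap.proj k : (Fin m → ℝ) →L[ℝ] ℝ))
        - ∑ u : U, (θ u / Real.pi ^ 2) •
            (∑ k, (∏ l ∈ Finset.univ.erase k, Real.cos (Real.pi * ((u : Fin m → ℕ) l : ℝ) * y l)) •
              ((-Real.sin (Real.pi * ((u : Fin m → ℕ) k : ℝ) * y k) * (Real.pi * ((u : Fin m → ℕ) k : ℝ))) •
                (ContinuousLinearMap.proj k : (Fin m → ℝ) →L[ℝ] ℝ)))) y := by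
  have hA : HasFDerivAt (fun z : Fin m → ℝ => ∑ j, z j ^ 2)
      (∑ k, (((2:ℕ):ℝ) * y k ^ 1) • (ContinuousLinearMap.proj k : (Fin m → ℝ) →L[ℝ] ℝ)) y :=
    HasFDerivAt.fun_sum fun k _ => by
      simpa [Function.comp_def] using (hasDerivAt_pow 2 (y k)).comp_hasFDerivAt y (hasFDerivAt_apply (𝕜 := ℝ) k y)
  have hB : ∀ u : U, HasFDerivAt
      (fun z : Fin m → ℝ => ∏ k, Real.cos (Real.pi * ((u : Fin m → ℕ) k : ℝ) * z k))
      (∑ k, (∏ l ∈ Finset.univ.erase k, Real.cos (Real.pi * ((u : Fin m → ℕ) l : ℝ) * y l)) •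
        ((-Real.sin (Real.pi * ((u : Fin m → ℕ) k : ℝ) * y k) * (Real.pi * ((u : Fin m → ℕ) k : ℝ))) •
          (ContinuousLinearMap.proj k : (Fin m → ℝ) →L[ℝ] ℝ))) y := fun u =>
    sgm_prod_hasFDerivAt
      (fun k t => Real.cos (Real.pi * ((u : Fin m → ℕ) k : ℝ) * t))
      (fun k t => -Real.sin (Real.pi * ((u : Fin m → ℕ) k : ℝ) * t) * (Real.pi * ((u : Fin m → ℕ) k : ℝ)))
      (fun k t => hasDerivAt_cos_mul _ t) y
  exact (hA.const_mul ((1:ℝ)/2)).sub (HasFDerivAt.fun_sum fun u _ => (hB u).const_mul _)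

lemma sgmF_prod {m : ℕ} (u : Fin m → ℕ) (j : Fin m) (y : Fin m → ℝ) :
    ∏ k, sgmF u j k (y k) =
      Real.sin (Real.pi * (u j : ℝ) * y j) *
        ∏ l ∈ Finset.univ.erase j, Real.cos (Real.pi * (u l : ℝ) * y l) := by
  rw [← Finset.mul_prod_erase _ _ (Finset.mem_univ j)]
  congr 1
  · simp [sgmF]
  · exact Finset.prod_congr rfl fun l hl => by
      simp [sgmF, (Finset.mem_erase.mp hl).1]

lemma sgm_fderiv_potential (m : ℕ) (U : Finset (Fin m → ℕ)) (θ : U → ℝ)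
    (y : Fin m → ℝ) (j : Fin m) :
    fderiv ℝ (sgmPotential m U θ) y (Pi.single j 1) = sgmG m U θ j y := by
  rw [(sgm_potential_hasFDerivAt m U θ y).fderiv]
  simp only [ContinuousLinearMap.sub_apply, ContinuousLinearMap.smul_apply,
    ContinuousLinearMap.sum_apply, ContinuousLinearMap.proj_apply, smul_eq_mul,
    Pi.single_apply, mul_ite, mul_one, mul_zero, Finset.sum_ite_eq', Finset.mem_univ,
    if_true]
  rw [sgmG, sub_eq_add_neg, ← Finset.sum_neg_distrib]
  congr 1
  · ring
  · refine Finset.sum_congr rfl fun u _ => ?_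
    rw [sgmF_prod]
    ring

lemma sgmG_hasFDerivAt (m : ℕ) (U : Finset (Fin m → ℕ)) (θ : U → ℝ) (j : Fin m)
    (y : Fin m → ℝ) :
    HasFDerivAt (sgmG m U θ j)
      ((ContinuousLinearMap.proj j : (Fin m → ℝ) →L[ℝ] ℝ) +
        ∑ u : U, (θ u / Real.pi ^ 2) •
          ((Real.pi * ((u : Fin m → ℕ) j : ℝ)) •
            (∑ k, (∏ l ∈ Finset.univ.erase k, sgmF (u : Fin m → ℕ) j l (y l)) •
              ((sgmF' (u : Fin m → ℕ) j k (y k)) •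
                (ContinuousLinearMap.proj k : (Fin m → ℝ) →L[ℝ] ℝ))))) y := by
  exact (hasFDerivAt_apply j y).add (HasFDerivAt.fun_sum fun u _ =>
    ((sgm_prod_hasFDerivAt (sgmF (u : Fin m → ℕ) j) (sgmF' (u : Fin m → ℕ) j)
      (sgmF_hasDerivAt _ j) y).const_mul _).const_mul _)

/-- entries of the matrix M_u -/
noncomputable def sgmM {m : ℕ} (u : Fin m → ℕ) (x : Fin m → ℝ) (i j : Fin m) : ℝ :=
  (Real.pi * (u j : ℝ)) / Real.pi ^ 2 *
    ((∏ l ∈ Finset.univ.erase i, sgmF u j l (x l)) * sgmF' u j i (x i))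

lemma sgm_hessian_eq (m : ℕ) (U : Finset (Fin m → ℕ)) (θ : U → ℝ) (x : Fin m → ℝ) :
    hessian m (sgmPotential m U θ) x =
      1 + Matrix.of (fun i j => ∑ u : U, θ u * sgmM (u : Fin m → ℕ) x i j) := by
  ext i j
  rw [hessian, Matrix.add_apply, Matrix.one_apply, Matrix.of_apply, Matrix.of_apply]
  have hfun : (fun y => fderiv ℝ (sgmPotential m U θ) y (Pi.single j 1)) = sgmG m U θ j :=
    funext fun y => sgm_fderiv_potential m U θ y j
  rw [hfun, (sgmG_hasFDerivAt m U θ j x).fderiv]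
  simp only [ContinuousLinearMap.add_apply, ContinuousLinearMap.smul_apply,
    ContinuousLinearMap.sum_apply, ContinuousLinearMap.proj_apply, smul_eq_mul,
    Pi.single_apply, mul_ite, mul_one, mul_zero, Finset.sum_ite_eq', Finset.mem_univ,
    if_true]
  congr 1
  · by_cases h : i = j
    · simp [h]
    · simp [h, Ne.symm h]
  · refine Finset.sum_congr rfl fun u _ => ?_
    simp only [sgmM]
    ring

lemma sgmM_diag {m : ℕ} (u : Fin m → ℕ) (x : Fin m → ℝ) (i : Fin m) :
    sgmM u x i i = ((u i : ℝ))^2 * ∏ k, Real.cos (Real.pi * (u k : ℝ) * x k) := by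
  rw [sgmM]
  have h1 : sgmF' u i i (x i) = Real.cos (Real.pi * (u i : ℝ) * x i) * (Real.pi * (u i : ℝ)) := by
    simp [sgmF']
  have h2 : ∏ l ∈ Finset.univ.erase i, sgmF u i l (x l)
      = ∏ l ∈ Finset.univ.erase i, Real.cos (Real.pi * (u l : ℝ) * x l) :=
    Finset.prod_congr rfl fun l hl => by simp [sgmF, (Finset.mem_erase.mp hl).1]
  rw [h1, h2, ← Finset.mul_prod_erase _ _ (Finset.mem_univ i)]
  have hπ : Real.pi ≠ 0 := Real.pi_ne_zero
  field_simp

lemma sgm_trace {m : ℕ} (u : Fin m → ℕ) (x : Fin m → ℝ) :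
    Matrix.trace (Matrix.of (sgmM u x)) =
      (∑ i, ((u i : ℝ))^2) * ∏ k, Real.cos (Real.pi * (u k : ℝ) * x k) := by
  rw [Matrix.trace, Finset.sum_mul]
  exact Finset.sum_congr rfl fun i _ => by
    rw [Matrix.diag_apply, Matrix.of_apply, sgmM_diag]

lemma sgm_det_line_hasDerivAt {m : ℕ} (M : Matrix (Fin m) (Fin m) ℝ) :
    HasDerivAt (fun t : ℝ => Matrix.det (1 + t • M)) (Matrix.trace M) 0 := by
  have hfun : (fun t : ℝ => Matrix.det (1 + t • M))
      = fun t => 1 + Matrix.trace M * t +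
          ((Matrix.det (1 + (Polynomial.X : Polynomial ℝ) • M.map Polynomial.C)).divX.divX).eval t * t^2 :=
    funext fun t => Matrix.det_one_add_smul t M
  rw [hfun]
  have h1 : HasDerivAt (fun t : ℝ => 1 + Matrix.trace M * t) (Matrix.trace M) 0 := by
    simpa using ((hasDerivAt_id (0:ℝ)).const_mul (Matrix.trace M)).const_add 1
  have h2 : HasDerivAt (fun t : ℝ =>
      ((Matrix.det (1 + (Polynomial.X : Polynomial ℝ) • M.map Polynomial.C)).divX.divX).eval t * t^2)
      0 0 := by
    have h := (Polynomial.hasDerivAt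
      ((Matrix.det (1 + (Polynomial.X : Polynomial ℝ) • M.map Polynomial.C)).divX.divX) 0).mul
      (hasDerivAt_pow 2 0)
    exact h.congr_deriv (by norm_num)
  simpa [Pi.add_def] using h1.add h2

lemma sgm_det_differentiableAt (m : ℕ) (U : Finset (Fin m → ℕ)) (x : Fin m → ℝ)
    (θ₀ : U → ℝ) :
    DifferentiableAt ℝ (fun θ : U → ℝ =>
      Matrix.det (1 + Matrix.of fun i j => ∑ u : U, θ u * sgmM (u : Fin m → ℕ) x i j)) θ₀ := by
  have h : (fun θ : U → ℝ =>
      Matrix.det (1 + Matrix.of fun i j => ∑ u : U, θ u * sgmM (u : Fin m → ℕ) x i j))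
      = fun θ => ∑ σ : Equiv.Perm (Fin m), ((Equiv.Perm.sign σ : ℤ) : ℝ) *
          ∏ i, (1 + Matrix.of fun i j => ∑ u : U, θ u * sgmM (u : Fin m → ℕ) x i j) (σ i) i :=
    funext fun θ => Matrix.det_apply' _
  rw [h]
  refine DifferentiableAt.fun_sum fun σ _ => DifferentiableAt.const_mul ?_ _
  have hent : ∀ i : Fin m, DifferentiableAt ℝ (fun θ : U → ℝ =>
      (1 + Matrix.of fun i j => ∑ u : U, θ u * sgmM (u : Fin m → ℕ) x i j) (σ i) i) θ₀ := by
    intro i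
    have heq : (fun θ : U → ℝ =>
        (1 + Matrix.of fun i j => ∑ u : U, θ u * sgmM (u : Fin m → ℕ) x i j) (σ i) i)
        = fun θ => (1 : Matrix (Fin m) (Fin m) ℝ) (σ i) i
            + ∑ u : U, θ u * sgmM (u : Fin m → ℕ) x (σ i) i := rfl
    rw [heq]
    exact (differentiableAt_const _).add (DifferentiableAt.fun_sum fun u _ =>
      ((hasFDerivAt_apply u θ₀).differentiableAt).mul_const _)
  exact (HasFDerivAt.finset_prod (fun i _ => (hent i).hasFDerivAt)).differentiableAt

/-- The score function at θ = 0: the partial derivative of log p(x|θ) with respect to θ_u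
at θ = 0 equals ‖u‖² Π_j cos(π u_j x_j). -/
theorem sgm_score_at_zero (m : ℕ) (hm : 0 < m) (U : Finset (Fin m → ℕ)) (u : U)
    (x : Fin m → ℝ) (hx : x ∈ Set.Icc (0 : Fin m → ℝ) 1) :
    fderiv ℝ (fun θ : U → ℝ => Real.log (sgmDensity m U θ x)) 0 (Pi.single u 1)
      = (∑ j, ((u : Fin m → ℕ) j : ℝ) ^ 2) *
        ∏ j, Real.cos (Real.pi * ((u : Fin m → ℕ) j : ℝ) * x j) := by
  classical
  set v : U → ℝ := Pi.single u 1 with hv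
  set F : (U → ℝ) → ℝ := fun θ =>
    Matrix.det (1 + Matrix.of fun i j => ∑ u' : U, θ u' * sgmM (u' : Fin m → ℕ) x i j) with hFdef
  have hFeq : ∀ θ : U → ℝ, sgmDensity m U θ x = F θ := fun θ => by
    rw [sgmDensity, sgm_hessian_eq]
  have hF0 : F 0 = 1 := by
    have hz : (Matrix.of fun (i j : Fin m) => ∑ u' : U, (0 : U → ℝ) u' * sgmM (u' : Fin m → ℕ) x i j) = 0 := by
      ext i j; simp
    simp only [hFdef, hz, add_zero, Matrix.det_one]
  have hd : DifferentiableAt ℝ F 0 := sgm_det_differentiableAt m U x 0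
  have hne : F 0 ≠ 0 := by rw [hF0]; norm_num
  have hlog : HasFDerivAt (fun θ => Real.log (F θ)) ((F 0)⁻¹ • fderiv ℝ F 0) 0 :=
    (hd.hasFDerivAt).log hne
  have hgoalfun : (fun θ : U → ℝ => Real.log (sgmDensity m U θ x))
      = fun θ => Real.log (F θ) := funext fun θ => by rw [hFeq]
  rw [hgoalfun, hlog.fderiv, hF0]
  simp only [inv_one, one_smul]
  -- now compute fderiv ℝ F 0 v
  set Mu : Matrix (Fin m) (Fin m) ℝ := Matrix.of (sgmM ((u : Fin m → ℕ)) x) with hMu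
  have hline : ∀ t : ℝ, F (t • v) = Matrix.det (1 + t • Mu) := by
    intro t
    have hM : (Matrix.of fun i j => ∑ u' : U, (t • v) u' * sgmM (u' : Fin m → ℕ) x i j)
        = t • Mu := by
      ext i j
      rw [Matrix.of_apply, Matrix.smul_apply, hMu, Matrix.of_apply, smul_eq_mul]
      rw [Finset.sum_eq_single u]
      · simp [hv]
      · intro u' _ hu'
        simp [hv, Pi.single_eq_of_ne hu']
      · simp
    simp only [hFdef]
    rw [hM]
  have hd1 : HasDerivAt (fun t : ℝ => F (t • v)) (fderiv ℝ F 0 v) 0 := by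
    have hdl : HasDerivAt (fun t : ℝ => t • v) v 0 := by
      simpa using (hasDerivAt_id (0:ℝ)).smul_const v
    have hd'' : HasFDerivAt F (fderiv ℝ F 0) ((0:ℝ) • v) := by
      rw [zero_smul]; exact hd.hasFDerivAt
    exact hd''.comp_hasDerivAt 0 hdl
  have hd2 : HasDerivAt (fun t : ℝ => F (t • v)) (Matrix.trace Mu) 0 := by
    have : (fun t : ℝ => F (t • v)) = fun t => Matrix.det (1 + t • Mu) := funext hline
    rw [this]
    exact sgm_det_line_hasDerivAt Mu
  have := hd1.unique hd2
  rw [this, hMu, sgm_trace]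
end

section
/- For any real θ with 0 < |θ| < 1, the double integral over [0,1]² of cos²(π(x₁ − x₂))/(1 + θ cos(π(x₁ − x₂))) + cos²(π(x₁ + x₂))/(1 + θ cos(π(x₁ + x₂))) with respect to (x₁, x₂) equals 2(1 − √(1 − θ²)) / (θ² √(1 − θ²)). -/
open Real intervalIntegral

/-- The Fisher information J_{uu}(θ) of SGM with m = 2 and U = {(1,1)}:
the double integral over [0,1]² of
cos²(π(x₁−x₂))/(1+θcos(π(x₁−x₂))) + cos²(π(x₁+x₂))/(1+θcos(π(x₁+x₂)))
equals 2(1 − √(1 − θ²))/(θ²√(1 − θ²)) for 0 < |θ| < 1. -/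
theorem fisher_integral_two_dim (θ : ℝ) (hθ0 : θ ≠ 0) (hθ1 : |θ| < 1) :
    (∫ x₁ in (0 : ℝ)..1, ∫ x₂ in (0 : ℝ)..1,
        (Real.cos (Real.pi * (x₁ - x₂)) ^ 2 / (1 + θ * Real.cos (Real.pi * (x₁ - x₂))) +
          Real.cos (Real.pi * (x₁ + x₂)) ^ 2 / (1 + θ * Real.cos (Real.pi * (x₁ + x₂)))))
      = 2 * (1 - Real.sqrt (1 - θ ^ 2)) / (θ ^ 2 * Real.sqrt (1 - θ ^ 2)) := by
  have hθ2 : θ ^ 2 < 1 := by nlinarith [sq_abs θ, abs_nonneg θ]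
  set s := Real.sqrt (1 - θ ^ 2) with hs_def
  have hs_pos : 0 < s := Real.sqrt_pos.mpr (by nlinarith)
  have hs2 : s ^ 2 = 1 - θ ^ 2 := Real.sq_sqrt (by nlinarith)
  have hπ : (Real.pi : ℝ) ≠ 0 := Real.pi_ne_zero
  set f : ℝ → ℝ := fun t => Real.cos (Real.pi * t) ^ 2 / (1 + θ * Real.cos (Real.pi * t))
    with hf_def
  have hd : ∀ t : ℝ, 0 < 1 + θ * Real.cos t := by
    intro t
    have h1 : |θ * Real.cos t| < 1 := by
      rw [abs_mul]
      calc |θ| * |Real.cos t| ≤ |θ| * 1 :=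
            mul_le_mul_of_nonneg_left (Real.abs_cos_le_one _) (abs_nonneg θ)
        _ < 1 := by simpa using hθ1
    have := abs_lt.mp h1
    linarith [this.1]
  have hfc : Continuous f := by
    apply Continuous.div
    · fun_prop
    · fun_prop
    · intro t; exact ne_of_gt (hd _)
  have hper : Function.Periodic f 2 := by
    intro t
    simp only [hf_def]
    rw [show Real.pi * (t + 2) = Real.pi * t + 2 * Real.pi by ring, Real.cos_add_two_pi]
  -- antiderivative
  set F : ℝ → ℝ := fun t => Real.sin (Real.pi * t) / (Real.pi * θ) - t / θ ^ 2
      + (1 / (θ ^ 2 * s)) * (t - (2 / Real.pi) * Real.arctan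
          (θ * Real.sin (Real.pi * t) / (1 + s + θ * Real.cos (Real.pi * t)))) with hF_def
  have hDpos : ∀ t : ℝ, 0 < 1 + s + θ * Real.cos t := by
    intro t; have := hd t; linarith
  have hderiv : ∀ t : ℝ, HasDerivAt F (f t) t := by
    intro t
    have hsin : HasDerivAt (fun x => Real.sin (Real.pi * x))
        (Real.cos (Real.pi * t) * (Real.pi * 1)) t :=
      ((hasDerivAt_id t).const_mul Real.pi).sin
    have hcos : HasDerivAt (fun x => Real.cos (Real.pi * x))
        (-Real.sin (Real.pi * t) * (Real.pi * 1)) t :=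
      ((hasDerivAt_id t).const_mul Real.pi).cos
    have hN : HasDerivAt (fun x => θ * Real.sin (Real.pi * x))
        (θ * (Real.cos (Real.pi * t) * (Real.pi * 1))) t := hsin.const_mul θ
    have hD : HasDerivAt (fun x => 1 + s + θ * Real.cos (Real.pi * x))
        (θ * (-Real.sin (Real.pi * t) * (Real.pi * 1))) t :=
      (hcos.const_mul θ).const_add (1 + s)
    have hA := hN.div hD (ne_of_gt (hDpos _))
    have hAt := hA.arctan
    have hFt := ((hsin.div_const (Real.pi * θ)).sub ((hasDerivAt_id t).div_const (θ ^ 2))).add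
      (((hasDerivAt_id t).sub (hAt.const_mul (2 / Real.pi))).const_mul (1 / (θ ^ 2 * s)))
    refine hFt.congr_deriv ?_
    symm
    simp only [Pi.div_apply]
    set c := Real.cos (Real.pi * t) with hc
    set σ := Real.sin (Real.pi * t) with hσ
    have hσc : σ ^ 2 + c ^ 2 = 1 := Real.sin_sq_add_cos_sq _
    have h1 : (1 + s + θ * c) ^ 2 + (θ * σ) ^ 2 = 2 * (1 + s) * (1 + θ * c) := by
      linear_combination θ ^ 2 * hσc + hs2
    have hDne : (1 + s + θ * c) ≠ 0 := ne_of_gt (hDpos _)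
    have h1θc : (0:ℝ) < 1 + θ * c := hd _
    have key : 1 + (θ * σ / (1 + s + θ * c)) ^ 2
        = 2 * (1 + s) * (1 + θ * c) / (1 + s + θ * c) ^ 2 := by
      rw [div_pow]
      field_simp
      linear_combination h1
    have h1s : (0:ℝ) < 1 + s := by linarith
    have hcne : (1 + θ * c) ≠ 0 := ne_of_gt h1θc
    have h1sne : (1 + s) ≠ 0 := ne_of_gt h1s
    have hnum : θ * (c * (Real.pi * 1)) * (1 + s + θ * c) - θ * σ * (θ * (-σ * (Real.pi * 1)))
        = Real.pi * θ * ((1 + s) * c + θ) := by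
      linear_combination Real.pi * θ ^ 2 * hσc
    have harc : 1 / (1 + (θ * σ / (1 + s + θ * c)) ^ 2) *
          ((θ * (c * (Real.pi * 1)) * (1 + s + θ * c) - θ * σ * (θ * (-σ * (Real.pi * 1))))
            / (1 + s + θ * c) ^ 2)
        = Real.pi * θ * ((1 + s) * c + θ) / (2 * (1 + s) * (1 + θ * c)) := by
      rw [key, hnum]
      field_simp
    rw [harc]
    have h3 : 1 - 2 / Real.pi * (Real.pi * θ * ((1 + s) * c + θ) / (2 * (1 + s) * (1 + θ * c)))
        = s / (1 + θ * c) := by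
      field_simp
      linear_combination (-1) * hs2
    rw [h3]
    have hcne2 : (1 + Real.cos (Real.pi * t) * θ) ≠ 0 := by
      rw [mul_comm]; exact hcne
    have hsne : s ≠ 0 := ne_of_gt hs_pos
    field_simp [hcne, hcne2, hsne]
    linear_combination (-1 + Real.cos (Real.pi * t) * θ) *
      (inv_mul_cancel₀ hcne2)
  have hkey : (∫ t in (-1:ℝ)..1, f t) = 2 * (1 - s) / (θ ^ 2 * s) := by
    rw [intervalIntegral.integral_eq_sub_of_hasDerivAt (fun x _ => hderiv x)
      (hfc.intervalIntegrable _ _)]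
    simp only [hF_def, mul_one, mul_neg_one, Real.sin_pi, Real.cos_pi, Real.sin_neg,
      Real.cos_neg, neg_zero, mul_zero, zero_div, Real.arctan_zero, zero_mul, sub_zero]
    field_simp
    ring
  have inner : ∀ x₁ : ℝ, (∫ x₂ in (0:ℝ)..1, (f (x₁ - x₂) + f (x₁ + x₂)))
      = 2 * (1 - s) / (θ ^ 2 * s) := by
    intro x₁
    have hint1 : IntervalIntegrable (fun x₂ => f (x₁ - x₂)) MeasureTheory.volume 0 1 :=
      ((hfc.comp (continuous_const.sub continuous_id)).intervalIntegrable _ _)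
    have hint2 : IntervalIntegrable (fun x₂ => f (x₁ + x₂)) MeasureTheory.volume 0 1 :=
      ((hfc.comp (continuous_const.add continuous_id)).intervalIntegrable _ _)
    rw [intervalIntegral.integral_add hint1 hint2]
    rw [intervalIntegral.integral_comp_sub_left f x₁, intervalIntegral.integral_comp_add_left f x₁]
    rw [show x₁ - 0 = x₁ by ring, show x₁ + 0 = x₁ by ring]
    rw [intervalIntegral.integral_add_adjacent_intervals (hfc.intervalIntegrable _ _)
      (hfc.intervalIntegrable _ _)]
    have h := hper.intervalIntegral_add_eq (x₁ - 1) (-1)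
    rw [show x₁ - 1 + 2 = x₁ + 1 by ring, show (-1:ℝ) + 2 = 1 by norm_num] at h
    rw [h, hkey]
  calc (∫ x₁ in (0 : ℝ)..1, ∫ x₂ in (0 : ℝ)..1,
        (Real.cos (Real.pi * (x₁ - x₂)) ^ 2 / (1 + θ * Real.cos (Real.pi * (x₁ - x₂))) +
          Real.cos (Real.pi * (x₁ + x₂)) ^ 2 / (1 + θ * Real.cos (Real.pi * (x₁ + x₂)))))
      = ∫ x₁ in (0 : ℝ)..1, (2 * (1 - s) / (θ ^ 2 * s)) := by
        refine intervalIntegral.integral_congr fun x₁ _ => ?_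
        exact inner x₁
    _ = 2 * (1 - s) / (θ ^ 2 * s) := by simp
end

section
/- The interior of the feasible region Θ (as a subset of ℝ^U) equals {θ ∈ ℝ^U : D²ψ(x|θ) is positive definite for all x ∈ [0,1]^m}. -/
open Real ContDiff Matrix

namespace SgmAux

variable {m : ℕ}

/-- The quadratic part of the potential. -/
noncomputable def qfun (m : ℕ) : (Fin m → ℝ) → ℝ := fun x => (1/2 : ℝ) * ∑ j, x j ^ 2

/-- The (normalized, negated) cosine-product associated to a frequency. -/
noncomputable def gfun (m : ℕ) (u : Fin m → ℕ) : (Fin m → ℝ) → ℝ :=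
  fun x => -(1 / Real.pi ^ 2) * ∏ j, Real.cos (Real.pi * (u j : ℝ) * x j)

lemma smooth_qfun : ContDiff ℝ ∞ (qfun m) := by
  apply contDiff_const.mul
  exact ContDiff.sum fun i _ => (contDiff_apply ℝ ℝ i).pow 2

lemma smooth_gfun (u : Fin m → ℕ) : ContDiff ℝ ∞ (gfun m u) := by
  apply contDiff_const.mul
  apply contDiff_prod
  intro i _
  exact (Real.contDiff_cos.restrict_scalars ℝ).comp
    (contDiff_const.mul (contDiff_apply ℝ ℝ i))

lemma sgm_decomp (U : Finset (Fin m → ℕ)) (θ : U → ℝ) :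
    sgmPotential m U θ = fun x => qfun m x + ∑ u : U, θ u * gfun m u.1 x := by
  funext x
  simp only [sgmPotential, qfun, gfun, sub_eq_add_neg]
  congr 1
  rw [← Finset.sum_neg_distrib]
  exact Finset.sum_congr rfl fun u _ => by ring

set_option maxHeartbeats 1000000 in
lemma smooth_sgm (U : Finset (Fin m → ℕ)) (θ : U → ℝ) :
    ContDiff ℝ ∞ (sgmPotential m U θ) := by
  rw [sgm_decomp]
  exact smooth_qfun.add (ContDiff.sum fun u _ => contDiff_const.mul (smooth_gfun u.1))

lemma fd1 {f : (Fin m → ℝ) → ℝ} (hf : ContDiff ℝ ∞ f) (v : Fin m → ℝ) :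
    ContDiff ℝ ∞ (fun y => fderiv ℝ f y v) :=
  (hf.fderiv_right (by simp)).clm_apply contDiff_const

lemma hessian_add {f g : (Fin m → ℝ) → ℝ} (hf : ContDiff ℝ ∞ f) (hg : ContDiff ℝ ∞ g)
    (x : Fin m → ℝ) :
    hessian m (fun z => f z + g z) x = hessian m f x + hessian m g x := by
  ext i j
  have h1 : (fun y => fderiv ℝ (fun z => f z + g z) y (Pi.single j 1))
      = fun y => fderiv ℝ f y (Pi.single j 1) + fderiv ℝ g y (Pi.single j 1) := by
    funext y
    rw [fderiv_fun_add ((hf.differentiable (by simp)).differentiableAt)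
      ((hg.differentiable (by simp)).differentiableAt)]
    simp
  simp only [hessian, Matrix.of_apply, Matrix.add_apply, h1]
  rw [fderiv_fun_add (((fd1 hf _).differentiable (by simp)).differentiableAt)
      (((fd1 hg _).differentiable (by simp)).differentiableAt)]
  simp

lemma hessian_smul {f : (Fin m → ℝ) → ℝ} (hf : ContDiff ℝ ∞ f) (c : ℝ) (x : Fin m → ℝ) :
    hessian m (fun z => c * f z) x = c • hessian m f x := by
  ext i j
  have h1 : (fun y => fderiv ℝ (fun z => c * f z) y (Pi.single j 1))
      = fun y => c * fderiv ℝ f y (Pi.single j 1) := by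
    funext y
    rw [fderiv_const_mul ((hf.differentiable (by simp)).differentiableAt)]
    simp
  simp only [hessian, Matrix.of_apply, Matrix.smul_apply, h1, smul_eq_mul]
  rw [fderiv_const_mul (((fd1 hf _).differentiable (by simp)).differentiableAt)]
  simp

lemma hessian_zero (x : Fin m → ℝ) :
    hessian m (fun _ => (0 : ℝ)) x = 0 := by
  ext i j
  have h1 : (fun y : Fin m → ℝ => fderiv ℝ (fun _ : Fin m → ℝ => (0:ℝ)) y (Pi.single j 1))
      = fun _ => (0 : ℝ) := by
    funext y
    simp [fderiv_const]
  simp [hessian, h1, fderiv_const]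

lemma hessian_sum {ι : Type*} (s : Finset ι) (a : ι → ℝ) (h : ι → (Fin m → ℝ) → ℝ)
    (hh : ∀ i, ContDiff ℝ ∞ (h i)) (x : Fin m → ℝ) :
    hessian m (fun z => ∑ i ∈ s, a i * h i z) x = ∑ i ∈ s, a i • hessian m (h i) x := by
  classical
  induction s using Finset.induction_on with
  | empty => simpa using hessian_zero x
  | insert b t hni ih =>
    have hsum : ContDiff ℝ ∞ (fun z => ∑ i ∈ t, a i * h i z) :=
      ContDiff.sum fun i _ => contDiff_const.mul (hh i)
    have hrw : (fun z => ∑ i ∈ insert b t, a i * h i z)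
        = fun z => a b * h b z + ∑ i ∈ t, a i * h i z := by
      funext z; rw [Finset.sum_insert hni]
    rw [hrw, hessian_add (contDiff_const.mul (hh b)) hsum, hessian_smul (hh b), ih,
      Finset.sum_insert hni]

lemma hessian_qfun (x : Fin m → ℝ) : hessian m (qfun m) x = 1 := by
  have hq : ∀ y : Fin m → ℝ, HasFDerivAt (qfun m)
      (∑ j : Fin m, y j • (ContinuousLinearMap.proj j : (Fin m → ℝ) →L[ℝ] ℝ)) y := by
    intro y
    have h : HasFDerivAt (fun x : Fin m → ℝ => ∑ j, x j ^ 2)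
        (∑ j : Fin m, (y j • (ContinuousLinearMap.proj j : (Fin m → ℝ) →L[ℝ] ℝ)
          + y j • (ContinuousLinearMap.proj j : (Fin m → ℝ) →L[ℝ] ℝ))) y := by
      have hh : (fun x : Fin m → ℝ => ∑ j, x j ^ 2)
          = fun x : Fin m → ℝ => ∑ j, x j * x j := by
        funext x; exact Finset.sum_congr rfl fun j _ => sq (x j)
      rw [hh]
      apply HasFDerivAt.fun_sum
      intro j _
      exact ((ContinuousLinearMap.proj j : (Fin m → ℝ) →L[ℝ] ℝ).hasFDerivAt (x := y)).mul
        ((ContinuousLinearMap.proj j : (Fin m → ℝ) →L[ℝ] ℝ).hasFDerivAt (x := y))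
    have h2 := h.const_mul (1/2 : ℝ)
    have hD : (1/2 : ℝ) • (∑ j : Fin m, (y j • (ContinuousLinearMap.proj j : (Fin m → ℝ) →L[ℝ] ℝ)
          + y j • (ContinuousLinearMap.proj j : (Fin m → ℝ) →L[ℝ] ℝ)))
        = ∑ j : Fin m, y j • (ContinuousLinearMap.proj j : (Fin m → ℝ) →L[ℝ] ℝ) := by
      ext v
      simp only [ContinuousLinearMap.smul_apply, ContinuousLinearMap.sum_apply,
        ContinuousLinearMap.add_apply, ContinuousLinearMap.proj_apply, smul_eq_mul,
        Finset.mul_sum]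
      exact Finset.sum_congr rfl fun j _ => by ring
    rwa [hD] at h2
  ext i j
  have h1 : (fun y : Fin m → ℝ => fderiv ℝ (qfun m) y (Pi.single j 1)) = fun y => y j := by
    funext y
    rw [(hq y).fderiv]
    simp [ContinuousLinearMap.sum_apply, Pi.single_apply]
  simp only [hessian, Matrix.of_apply, h1]
  have h2 : fderiv ℝ (fun y : Fin m → ℝ => y j) x
      = (ContinuousLinearMap.proj j : (Fin m → ℝ) →L[ℝ] ℝ) :=
    (ContinuousLinearMap.proj j : (Fin m → ℝ) →L[ℝ] ℝ).fderiv
  rw [h2]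
  simp [Matrix.one_apply, Pi.single_apply, eq_comm]

lemma hessian_entry_continuous {f : (Fin m → ℝ) → ℝ} (hf : ContDiff ℝ ∞ f) (i j : Fin m) :
    Continuous (fun x => hessian m f x i j) :=
  (((fd1 hf (Pi.single j 1)).fderiv_right (m := ∞) (by simp)).clm_apply
    contDiff_const).continuous

lemma hessian_symm {f : (Fin m → ℝ) → ℝ} (hf : ContDiff ℝ ∞ f) (x : Fin m → ℝ) (i j : Fin m) :
    hessian m f x i j = hessian m f x j i := by
  have key : ∀ v w : Fin m → ℝ,
      fderiv ℝ (fun y => fderiv ℝ f y w) x v = fderiv ℝ (fderiv ℝ f) x v w := by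
    intro v w
    rw [fderiv_clm_apply
      ((((hf.fderiv_right (m := ∞) (by simp)).differentiable (by simp))).differentiableAt)
      (differentiableAt_const w)]
    simp
  have symm := second_derivative_symmetric (f := f) (f' := fderiv ℝ f)
    (f'' := fderiv ℝ (fderiv ℝ f) x) (x := x)
    (fun y => (hf.differentiable (by simp)).differentiableAt.hasFDerivAt)
    (((hf.fderiv_right (m := ∞) (by simp)).differentiable (by simp)).differentiableAt.hasFDerivAt)
  simp only [hessian, Matrix.of_apply, key]
  exact symm _ _

lemma hessian_isHermitian {f : (Fin m → ℝ) → ℝ} (hf : ContDiff ℝ ∞ f) (x : Fin m → ℝ) :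
    (hessian m f x).IsHermitian := by
  apply Matrix.IsHermitian.ext
  intro i j
  simp only [star_trivial]
  exact hessian_symm hf x j i

/-- The Hessian of the potential is affine in θ. -/
lemma hessian_sgm (U : Finset (Fin m → ℕ)) (θ : U → ℝ) (x : Fin m → ℝ) :
    hessian m (sgmPotential m U θ) x = 1 + ∑ u : U, θ u • hessian m (gfun m u.1) x := by
  have hsum : ContDiff ℝ ∞ (fun x : Fin m → ℝ => ∑ u : U, θ u * gfun m u.1 x) :=
    ContDiff.sum fun u _ => contDiff_const.mul (smooth_gfun u.1)
  have h1 := hessian_add (f := qfun m)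
    (g := fun x : Fin m → ℝ => ∑ u : U, θ u * gfun m u.1 x) smooth_qfun hsum x
  have h2 := hessian_sum (m := m) Finset.univ θ (fun u : U => gfun m u.1)
    (fun u => smooth_gfun u.1) x
  rw [sgm_decomp U θ]
  rw [h1, hessian_qfun, h2]

/-- Scaling θ acts affinely on the Hessian. -/
lemma hessian_sgm_smul (U : Finset (Fin m → ℕ)) (θ : U → ℝ) (s : ℝ) (x : Fin m → ℝ) :
    hessian m (sgmPotential m U (s • θ)) x
      = (1 - s) • (1 : Matrix (Fin m) (Fin m) ℝ) + s • hessian m (sgmPotential m U θ) x := by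
  rw [hessian_sgm, hessian_sgm]
  have hsum : ∑ u : U, (s • θ) u • hessian m (gfun m u.1) x
      = s • ∑ u : U, θ u • hessian m (gfun m u.1) x := by
    rw [Finset.smul_sum]
    exact Finset.sum_congr rfl fun u _ => by
      simp [Pi.smul_apply, mul_smul]
  rw [hsum]
  module

lemma dot_self_pos {v : Fin m → ℝ} (hv : v ≠ 0) : 0 < v ⬝ᵥ v := by
  have h1 : ∀ i ∈ Finset.univ, 0 ≤ v i * v i := fun i _ => mul_self_nonneg (v i)
  obtain ⟨i, hi⟩ := Function.ne_iff.1 hv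
  exact Finset.sum_pos' h1 ⟨i, Finset.mem_univ i, mul_self_pos.2 (by simpa using hi)⟩

end SgmAux

open SgmAux in
/-- The interior of the feasible region Θ is the set of θ for which the Hessian
D²ψ(x|θ) is positive definite for all x ∈ [0,1]^m. -/
theorem sgm_interior_of_feasible_region (m : ℕ) (hm : 0 < m)
    (U : Finset (Fin m → ℕ)) :
    interior {θ : U → ℝ | ∀ x ∈ Set.Icc (0 : Fin m → ℝ) 1,
        (hessian m (sgmPotential m U θ) x).PosSemidef}
      = {θ : U → ℝ | ∀ x ∈ Set.Icc (0 : Fin m → ℝ) 1,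
          (hessian m (sgmPotential m U θ) x).PosDef} := by
  set S := {θ : U → ℝ | ∀ x ∈ Set.Icc (0 : Fin m → ℝ) 1,
    (hessian m (sgmPotential m U θ) x).PosSemidef} with hS
  ext θ
  simp only [Set.mem_setOf_eq]
  constructor
  · -- interior ⊆ PD
    intro hθ x hx
    refine Matrix.PosDef.of_dotProduct_mulVec_pos (hessian_isHermitian (smooth_sgm U θ) x) fun v hv => ?_
    simp only [star_trivial, RCLike.re_to_real]
    by_contra hle
    push_neg at hle
    have hpsd : (hessian m (sgmPotential m U θ) x).PosSemidef := interior_subset hθ x hx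
    have h0 : v ⬝ᵥ (hessian m (sgmPotential m U θ) x).mulVec v = 0 := by
      have := hpsd.dotProduct_mulVec_nonneg v
      simp only [star_trivial, RCLike.re_to_real] at this
      linarith
    obtain ⟨ε, εpos, hball⟩ := Metric.mem_nhds_iff.1 (mem_interior_iff_mem_nhds.1 hθ)
    set t : ℝ := ε / (2 * (‖θ‖ + 1)) with ht
    have hnn : (0:ℝ) ≤ ‖θ‖ := norm_nonneg θ
    have tpos : 0 < t := by rw [ht]; exact div_pos εpos (by positivity)
    have hmem : (1 + t) • θ ∈ Metric.ball θ ε := by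
      rw [Metric.mem_ball, dist_eq_norm]
      have : (1 + t) • θ - θ = t • θ := by module
      rw [this, norm_smul]
      simp only [Real.norm_eq_abs, abs_of_pos tpos]
      have h1 : t * ‖θ‖ < t * (‖θ‖ + 1) := by nlinarith
      have h2 : t * (‖θ‖ + 1) = ε / 2 := by
        rw [ht]; field_simp
      linarith
    have hpsd' := (hball hmem) x hx
    have h2 := hpsd'.dotProduct_mulVec_nonneg v
    simp only [star_trivial, RCLike.re_to_real] at h2
    rw [hessian_sgm_smul U θ (1 + t) x] at h2
    simp only [Matrix.add_mulVec, Matrix.smul_mulVec, Matrix.one_mulVec,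
      dotProduct_add, dotProduct_smul, smul_eq_mul, h0] at h2
    have hdots : 0 < v ⬝ᵥ v := dot_self_pos hv
    nlinarith
  · -- PD ⊆ interior
    intro hpd
    rw [mem_interior_iff_mem_nhds]
    set F : ((U → ℝ) × ((Fin m → ℝ) × (Fin m → ℝ))) → ℝ :=
      fun p => p.2.2 ⬝ᵥ (hessian m (sgmPotential m U p.1) p.2.1).mulVec p.2.2 with hF
    have hFrw : F = fun p => ∑ i, p.2.2 i * ∑ j,
        (((1 : Matrix (Fin m) (Fin m) ℝ) i j)
          + ∑ u : U, p.1 u * hessian m (gfun m u.1) p.2.1 i j) * p.2.2 j := by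
      funext p
      simp [hF, hessian_sgm, Matrix.mulVec, dotProduct, Matrix.add_apply,
        Matrix.sum_apply, Matrix.smul_apply, smul_eq_mul]
    have hFcont : Continuous F := by
      rw [hFrw]
      apply continuous_finset_sum
      intro i _
      apply Continuous.mul ((continuous_apply i).comp (continuous_snd.comp continuous_snd))
      apply continuous_finset_sum
      intro j _
      apply Continuous.mul
      · apply Continuous.add continuous_const
        apply continuous_finset_sum
        intro u _
        exact ((continuous_apply u).comp continuous_fst).mul
          ((hessian_entry_continuous (smooth_gfun u.1) i j).comp
            (continuous_fst.comp continuous_snd))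
      · exact (continuous_apply j).comp (continuous_snd.comp continuous_snd)
    set K : Set ((Fin m → ℝ) × (Fin m → ℝ)) :=
      (Set.Icc (0 : Fin m → ℝ) 1) ×ˢ Metric.sphere (0 : Fin m → ℝ) 1 with hK
    have hKcomp : IsCompact K := isCompact_Icc.prod (isCompact_sphere _ _)
    have hOopen : IsOpen {p : (U → ℝ) × ((Fin m → ℝ) × (Fin m → ℝ)) | 0 < F p} :=
      isOpen_lt continuous_const hFcont
    have hsub : ({θ} : Set (U → ℝ)) ×ˢ K ⊆ {p | 0 < F p} := by
      rintro ⟨θ₁, x, v⟩ ⟨hθ₁, hxv⟩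
      simp only [Set.mem_singleton_iff] at hθ₁
      obtain ⟨hx, hv⟩ := hxv
      have hvnorm : ‖v‖ = 1 := by simpa using hv
      have hvne : v ≠ 0 := by
        intro h; rw [h] at hvnorm; simp at hvnorm
      have := (hpd x hx).dotProduct_mulVec_pos hvne
      simp only [star_trivial, RCLike.re_to_real] at this
      simpa [hF, hθ₁] using this
    obtain ⟨V, W, hVopen, _, hθV, hKW, hVW⟩ :=
      generalized_tube_lemma isCompact_singleton hKcomp hOopen hsub
    apply Filter.mem_of_superset (hVopen.mem_nhds (hθV rfl))
    intro θ' hθ' x hx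
    refine Matrix.PosDef.posSemidef (Matrix.PosDef.of_dotProduct_mulVec_pos (hessian_isHermitian (smooth_sgm U θ') x) fun v hv => ?_)
    simp only [star_trivial, RCLike.re_to_real]
    have hvne : ‖v‖ ≠ 0 := norm_ne_zero_iff.2 hv
    set w : Fin m → ℝ := ‖v‖⁻¹ • v with hw
    have hwnorm : ‖w‖ = 1 := by
      rw [hw, norm_smul, norm_inv, norm_norm, inv_mul_cancel₀ hvne]
    have hmemK : (x, w) ∈ K := ⟨hx, by simpa using hwnorm⟩
    have hFpos : 0 < F (θ', x, w) := hVW (Set.mk_mem_prod hθ' (hKW hmemK))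
    have hveq : v = ‖v‖ • w := by
      rw [hw, smul_smul, mul_inv_cancel₀ hvne, one_smul]
    rw [hveq]
    simp only [Matrix.mulVec_smul, smul_dotProduct, dotProduct_smul, smul_eq_mul]
    have hnormpos : 0 < ‖v‖ := lt_of_le_of_ne (norm_nonneg v) (Ne.symm hvne)
    have hww : 0 < w ⬝ᵥ (hessian m (sgmPotential m U θ') x).mulVec w := hFpos
    nlinarith [mul_pos hnormpos (mul_pos hnormpos hww)]
end

section
/- The interior Θ° = {θ ∈ ℝ^U : D²ψ(x|θ) is positive definite for all x ∈ [0,1]^m} of the feasible region satisfies Θ° = ⋂_{M'≥1} ⋃_{M≥max(M', U_max+1)} Θ_M°, i.e. Θ° equals the limit superior of the sets Θ_M° as M → ∞. -/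
open Real

/-- The linear map K_M on ℝ^U, (K_M θ)_u = θ_u / Π_j (1 − u_j/M). -/
noncomputable def kmap (m : ℕ) (U : Finset (Fin m → ℕ)) (M : ℕ) (θ : U → ℝ) : U → ℝ :=
  fun u => θ u / ∏ j, (1 - ((u : Fin m → ℕ) j : ℝ) / M)

/-- The inner approximation Θ_M°: positive definiteness of D²ψ(ξ|K_Mθ) at all lattice
points ξ ∈ L_M^m where L_M = {0/M, 1/M, …, M/M}. -/
def innerApprox (m : ℕ) (U : Finset (Fin m → ℕ)) (M : ℕ) : Set (U → ℝ) :=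
  {θ : U → ℝ | ∀ ξ : Fin m → ℝ,
    (∀ j, ∃ k : ℕ, k ≤ M ∧ ξ j = (k : ℝ) / M) →
    (hessian m (sgmPotential m U (kmap m U M θ)) ξ).PosDef}

namespace SGMaux

open Finset

open Finset

variable {m : ℕ}

noncomputable def tf (u : Fin m → ℕ) (S : Finset (Fin m)) (k : Fin m) (t : ℝ) : ℝ :=
  if k ∈ S then Real.sin (Real.pi * u k * t) else Real.cos (Real.pi * u k * t)

noncomputable def tfd (u : Fin m → ℕ) (S : Finset (Fin m)) (k : Fin m) (t : ℝ) : ℝ :=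
  if k ∈ S then Real.pi * u k * Real.cos (Real.pi * u k * t)
  else -(Real.pi * u k * Real.sin (Real.pi * u k * t))

lemma hasDerivAt_tf (u : Fin m → ℕ) (S : Finset (Fin m)) (k : Fin m) (t : ℝ) :
    HasDerivAt (tf u S k) (tfd u S k t) t := by
  have h1 : HasDerivAt (fun t : ℝ => Real.pi * u k * t) (Real.pi * u k) t := by
    simpa using (hasDerivAt_id t).const_mul (Real.pi * (u k : ℝ))
  unfold tf tfd
  by_cases h : k ∈ S <;> simp only [h, if_true, if_false]
  · have := (Real.hasDerivAt_sin (Real.pi * u k * t)).comp t h1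
    exact this.congr_deriv (by ring)
  · have := (Real.hasDerivAt_cos (Real.pi * u k * t)).comp t h1
    exact this.congr_deriv (by ring)

noncomputable def trigP (u : Fin m → ℕ) (S : Finset (Fin m)) (x : Fin m → ℝ) : ℝ :=
  ∏ k, tf u S k (x k)

lemma hasFDerivAt_trigP (u : Fin m → ℕ) (S : Finset (Fin m)) (x : Fin m → ℝ) :
    HasFDerivAt (trigP u S)
      (∑ j, (∏ k ∈ univ.erase j, tf u S k (x k)) •
        (tfd u S j (x j) • (ContinuousLinearMap.proj j : (Fin m → ℝ) →L[ℝ] ℝ))) x := by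
  apply HasFDerivAt.finset_prod
  intro i _
  exact (hasDerivAt_tf u S i (x i)).comp_hasFDerivAt x (ContinuousLinearMap.proj (R := ℝ) (φ := fun _ : Fin m => ℝ) i).hasFDerivAt

lemma trigP_insert (u : Fin m → ℕ) (S : Finset (Fin m)) (j : Fin m) (hj : j ∉ S)
    (y : Fin m → ℝ) :
    trigP u (insert j S) y
      = Real.sin (Real.pi * u j * y j) * ∏ k ∈ univ.erase j, tf u S k (y k) := by
  rw [trigP, ← Finset.mul_prod_erase univ _ (mem_univ j)]
  have h1 : tf u (insert j S) j (y j) = Real.sin (Real.pi * u j * y j) := by simp [tf]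
  have h2 : ∏ k ∈ univ.erase j, tf u (insert j S) k (y k)
      = ∏ k ∈ univ.erase j, tf u S k (y k) := by
    refine Finset.prod_congr rfl fun k hk => ?_
    have hkj : k ≠ j := Finset.ne_of_mem_erase hk
    simp [tf, hkj, Finset.mem_insert]
  rw [h1, h2]

lemma trigP_empty_eq (u : Fin m → ℕ) (j : Fin m) (y : Fin m → ℝ) :
    trigP u ∅ y
      = Real.cos (Real.pi * u j * y j) * ∏ k ∈ univ.erase j, tf u ∅ k (y k) := by
  rw [trigP, ← Finset.mul_prod_erase univ _ (mem_univ j)]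
  have h1 : tf u ∅ j (y j) = Real.cos (Real.pi * u j * y j) := by simp [tf]
  rw [h1]



variable {U : Finset (Fin m → ℕ)}

lemma trigP_singleton (u : Fin m → ℕ) (j : Fin m) (y : Fin m → ℝ) :
    trigP u {j} y
      = Real.sin (Real.pi * u j * y j) * ∏ k ∈ univ.erase j, tf u ∅ k (y k) := by
  simpa using trigP_insert u ∅ j (by simp) y

lemma sgm_eq (θ : U → ℝ) :
    sgmPotential m U θ
      = fun x => (1/2) * ∑ j, x j ^ 2
          - ∑ u : U, (θ u / Real.pi ^ 2) * trigP u.1 ∅ x := by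
  funext x
  unfold sgmPotential trigP tf
  simp

lemma fderiv_sgm_apply (θ : U → ℝ) (y : Fin m → ℝ) (j : Fin m) :
    fderiv ℝ (sgmPotential m U θ) y (Pi.single j 1)
      = y j + ∑ u : U, θ u * u.1 j / Real.pi * trigP u.1 {j} y := by
  have H : HasFDerivAt (sgmPotential m U θ)
      ((1/2 : ℝ) • (∑ i, ((2:ℕ) * y i ^ 1) •
          (ContinuousLinearMap.proj i : (Fin m → ℝ) →L[ℝ] ℝ))
        - ∑ u : U, (θ u / Real.pi ^ 2) •
            (∑ i, (∏ k ∈ univ.erase i, tf u.1 ∅ k (y k)) •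
              (tfd u.1 ∅ i (y i) •
                (ContinuousLinearMap.proj i : (Fin m → ℝ) →L[ℝ] ℝ)))) y := by
    rw [sgm_eq]
    apply HasFDerivAt.sub
    · exact (HasFDerivAt.fun_sum (fun i _ =>
        (hasDerivAt_pow 2 (y i)).comp_hasFDerivAt y (ContinuousLinearMap.proj (R := ℝ) (φ := fun _ : Fin m => ℝ) i).hasFDerivAt)).const_mul _
    · exact HasFDerivAt.fun_sum (fun u _ => (hasFDerivAt_trigP u.1 ∅ y).const_mul _)
  rw [H.fderiv]
  have hπ : (Real.pi : ℝ) ≠ 0 := Real.pi_ne_zero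
  simp only [ContinuousLinearMap.sub_apply, ContinuousLinearMap.smul_apply,
    ContinuousLinearMap.sum_apply, ContinuousLinearMap.proj_apply, Pi.single_apply,
    smul_eq_mul, mul_ite, mul_one, mul_zero, Finset.sum_ite_eq', Finset.mem_univ, if_true]
  rw [sub_eq_add_neg, ← Finset.sum_neg_distrib]
  congr 1
  · ring
  · refine Finset.sum_congr rfl fun u _ => ?_
    rw [trigP_singleton, tfd]
    simp only [Finset.notMem_empty, if_false]
    field_simp

lemma hessian_sgm_apply (θ : U → ℝ) (x : Fin m → ℝ) (i j : Fin m) :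
    hessian m (sgmPotential m U θ) x i j
      = (if i = j then 1 else 0)
        + ∑ u : U, θ u * u.1 i * u.1 j *
            (if i = j then trigP u.1 ∅ x else - trigP u.1 {i, j} x) := by
  have hrw : (fun y => fderiv ℝ (sgmPotential m U θ) y (Pi.single j 1))
      = fun y => y j + ∑ u : U, θ u * u.1 j / Real.pi * trigP u.1 {j} y := by
    funext y; exact fderiv_sgm_apply θ y j
  have H : HasFDerivAt
      (fun y : Fin m → ℝ => y j + ∑ u : U, θ u * u.1 j / Real.pi * trigP u.1 {j} y)
      ((ContinuousLinearMap.proj j : (Fin m → ℝ) →L[ℝ] ℝ)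
        + ∑ u : U, (θ u * u.1 j / Real.pi) •
            (∑ l, (∏ k ∈ univ.erase l, tf u.1 {j} k (x k)) •
              (tfd u.1 {j} l (x l) •
                (ContinuousLinearMap.proj l : (Fin m → ℝ) →L[ℝ] ℝ)))) x := by
    apply HasFDerivAt.add
    · exact hasFDerivAt_apply j x
    · exact HasFDerivAt.fun_sum (fun u _ => (hasFDerivAt_trigP u.1 {j} x).const_mul _)
  show fderiv ℝ (fun y => fderiv ℝ (sgmPotential m U θ) y (Pi.single j 1)) x (Pi.single i 1) = _
  rw [hrw, H.fderiv]
  have hπ : (Real.pi : ℝ) ≠ 0 := Real.pi_ne_zero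
  simp only [ContinuousLinearMap.add_apply, ContinuousLinearMap.smul_apply,
    ContinuousLinearMap.sum_apply, ContinuousLinearMap.proj_apply, Pi.single_apply,
    smul_eq_mul, mul_ite, mul_one, mul_zero, Finset.sum_ite_eq', Finset.mem_univ, if_true]
  by_cases hij : i = j
  · subst hij
    simp only [if_true]
    congr 1
    refine Finset.sum_congr rfl fun u _ => ?_
    have hpr : ∏ k ∈ univ.erase i, tf u.1 {i} k (x k)
        = ∏ k ∈ univ.erase i, tf u.1 ∅ k (x k) :=
      Finset.prod_congr rfl fun k hk => by
        simp [tf, Finset.ne_of_mem_erase hk]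
    rw [hpr, trigP_empty_eq u.1 i x, tfd]
    simp only [Finset.mem_singleton, if_true]
    field_simp
  · have hji : ¬ (j = i) := fun h => hij h.symm
    simp only [hij, hji, if_false, zero_add]
    refine Finset.sum_congr rfl fun u _ => ?_
    have hpair : ({i, j} : Finset (Fin m)) = insert i {j} := rfl
    rw [hpair, trigP_insert u.1 {j} i (by simp [hij]), tfd]
    simp only [Finset.mem_singleton, hij, if_false]
    field_simp


noncomputable def fejer (M : ℕ) (y : ℝ) : ℝ :=
  (1 / M) * Complex.normSq (∑ n ∈ Finset.range M,
    Complex.exp (Real.pi * n * y * Complex.I))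

lemma fejer_nonneg (M : ℕ) (y : ℝ) : 0 ≤ fejer M y :=
  mul_nonneg (by positivity) (Complex.normSq_nonneg _)

lemma sum_exp_zero_or (M : ℕ) (hM : 0 < M) (r : ℤ) (hr2 : r.natAbs < 2*M) :
    ∑ k ∈ Finset.range (2*M), Complex.exp (Real.pi * r * ((k : ℂ)/M) * Complex.I)
      = if r = 0 then ((2*M : ℕ) : ℂ) else 0 := by
  by_cases hr : r = 0
  · subst hr; simp
  · simp only [hr, if_false]
    have hMC : (M : ℂ) ≠ 0 := Nat.cast_ne_zero.mpr hM.ne'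
    set z : ℂ := Complex.exp (Real.pi * r * (1/(M:ℂ)) * Complex.I) with hz
    have hzk : ∀ k : ℕ, Complex.exp (Real.pi * r * ((k : ℂ)/M) * Complex.I) = z ^ k := by
      intro k
      rw [hz, ← Complex.exp_nat_mul]
      congr 1
      ring
    have hz1 : z ≠ 1 := by
      intro h
      rw [hz, Complex.exp_eq_one_iff] at h
      obtain ⟨n, hn⟩ := h
      have hπ : (Real.pi : ℂ) ≠ 0 := Complex.ofReal_ne_zero.mpr Real.pi_ne_zero
      have h2 : (Real.pi:ℂ) * Complex.I * r = (Real.pi:ℂ) * Complex.I * (2*n*M) := by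
        field_simp at hn
        linear_combination (Real.pi * Complex.I) * hn
      have h3 : (r : ℂ) = 2*n*M := mul_left_cancel₀ (mul_ne_zero hπ Complex.I_ne_zero) h2
      have h4 : r = 2*n*M := by exact_mod_cast h3
      rcases eq_or_ne n 0 with hn0 | hn0
      · rw [hn0] at h4; simp at h4; exact hr h4
      · have h5 : r.natAbs = 2 * (n.natAbs * M) := by
          rw [h4]
          simp [Int.natAbs_mul, mul_assoc]
        have h6 : 1 ≤ n.natAbs := Nat.one_le_iff_ne_zero.mpr (Int.natAbs_ne_zero.mpr hn0)
        have h7 : M ≤ n.natAbs * M := Nat.le_mul_of_pos_left M (by omega)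
        omega
    have hztop : z ^ (2*M) = 1 := by
      rw [hz, ← Complex.exp_nat_mul]
      have : (2*M : ℕ) * (Real.pi * r * (1/(M:ℂ)) * Complex.I) = r * (2 * Real.pi * Complex.I) := by
        push_cast
        field_simp
      rw [this]
      exact_mod_cast Complex.exp_int_mul_two_pi_mul_I r
    calc ∑ k ∈ Finset.range (2*M), Complex.exp (Real.pi * r * ((k : ℂ)/M) * Complex.I)
        = ∑ k ∈ Finset.range (2*M), z ^ k := by
          exact Finset.sum_congr rfl fun k _ => hzk k
      _ = (z ^ (2*M) - 1) / (z - 1) := geom_sum_eq hz1 (2*M)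
      _ = 0 := by rw [hztop]; simp


lemma fejer_eq_double (M : ℕ) (hM : 0 < M) (y : ℝ) :
    (fejer M y : ℂ) = (1/(M:ℂ)) * ∑ n ∈ Finset.range M, ∑ n' ∈ Finset.range M,
      Complex.exp (Real.pi * ((n : ℂ) - (n' : ℂ)) * y * Complex.I) := by
  set S : ℂ := ∑ n ∈ Finset.range M, Complex.exp (Real.pi * n * y * Complex.I) with hS
  have h1 : (fejer M y : ℂ) = (1/(M:ℂ)) * (S * (starRingEnd ℂ) S) := by
    rw [fejer, Complex.mul_conj]
    push_cast
    ring
  rw [h1]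
  congr 1
  have hconj : (starRingEnd ℂ) S
      = ∑ n' ∈ Finset.range M, Complex.exp (-(Real.pi * n' * y * Complex.I)) := by
    rw [hS, map_sum]
    refine Finset.sum_congr rfl fun n' _ => ?_
    rw [← Complex.exp_conj]
    congr 1
    simp [Complex.conj_ofReal]
  rw [hconj, hS, Finset.sum_mul_sum]
  refine Finset.sum_congr rfl fun n _ => Finset.sum_congr rfl fun n' _ => ?_
  rw [← Complex.exp_add]
  congr 1
  ring

lemma fejer_sample_exp (M : ℕ) (hM : 0 < M) (u : ℕ) (hu : u < M) (x : ℝ) :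
    ∑ k ∈ Finset.range (2*M), (fejer M (x - (k:ℝ)/M) : ℂ) *
        Complex.exp (Real.pi * (u:ℂ) * ((k:ℂ)/M) * Complex.I)
      = 2*((M:ℂ) - (u:ℂ)) * Complex.exp (Real.pi * u * x * Complex.I) := by
  have hMC : (M : ℂ) ≠ 0 := Nat.cast_ne_zero.mpr hM.ne'
  have step1 : ∀ k ∈ Finset.range (2*M),
      (fejer M (x - (k:ℝ)/M) : ℂ) * Complex.exp (Real.pi * (u:ℂ) * ((k:ℂ)/M) * Complex.I)
      = ∑ n' ∈ Finset.range M, ∑ n ∈ Finset.range M,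
          (1/(M:ℂ)) * Complex.exp (Real.pi * ((n : ℂ) - (n' : ℂ)) * x * Complex.I) *
            Complex.exp (Real.pi * ((((u:ℤ) + n' - n : ℤ) : ℂ)) * ((k:ℂ)/M) * Complex.I) := by
    intro k _
    rw [fejer_eq_double M hM, Finset.mul_sum, Finset.sum_mul, Finset.sum_comm]
    refine Finset.sum_congr rfl fun n' _ => ?_
    rw [Finset.mul_sum, Finset.sum_mul]
    refine Finset.sum_congr rfl fun n _ => ?_
    simp only [mul_assoc, ← Complex.exp_add]
    congr 1
    push_cast
    ring
  rw [Finset.sum_congr rfl step1, Finset.sum_comm]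
  have step2 : ∀ n' ∈ Finset.range M,
      (∑ k ∈ Finset.range (2*M), ∑ n ∈ Finset.range M,
        (1/(M:ℂ)) * Complex.exp (Real.pi * ((n : ℂ) - (n' : ℂ)) * x * Complex.I) *
          Complex.exp (Real.pi * ((((u:ℤ) + n' - n : ℤ) : ℂ)) * ((k:ℂ)/M) * Complex.I))
      = if u + n' < M then 2 * Complex.exp (Real.pi * u * x * Complex.I) else 0 := by
    intro n' hn'
    rw [Finset.sum_comm]
    have inner : ∀ n ∈ Finset.range M,
        (∑ k ∈ Finset.range (2*M),
          (1/(M:ℂ)) * Complex.exp (Real.pi * ((n : ℂ) - (n' : ℂ)) * x * Complex.I) *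
            Complex.exp (Real.pi * ((((u:ℤ) + n' - n : ℤ) : ℂ)) * ((k:ℂ)/M) * Complex.I))
        = if n = u + n' then 2 * Complex.exp (Real.pi * u * x * Complex.I) else 0 := by
      intro n hn
      rw [← Finset.mul_sum]
      have hbound : ((u:ℤ) + n' - n).natAbs < 2*M := by
        simp only [Finset.mem_range] at hn hn'
        omega
      rw [sum_exp_zero_or M hM _ hbound]
      by_cases hcase : n = u + n'
      · have hz : ((u:ℤ) + n' - n) = 0 := by omega
        rw [if_pos hz, if_pos hcase]
        have hnc : ((n:ℂ) - n') = (u:ℂ) := by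
          rw [hcase]; push_cast; ring
        rw [hnc]
        push_cast
        field_simp
      · have hz : ¬ ((u:ℤ) + n' - n) = 0 := by omega
        rw [if_neg hz, if_neg hcase, mul_zero]
    rw [Finset.sum_congr rfl inner]
    rw [Finset.sum_ite_eq' (Finset.range M) (u + n')]
    simp [Finset.mem_range]
  rw [Finset.sum_congr rfl step2]
  have hfilter : Finset.filter (fun n' => u + n' < M) (Finset.range M)
      = Finset.range (M - u) := by
    ext a
    simp only [Finset.mem_filter, Finset.mem_range]
    omega
  rw [Finset.sum_ite, Finset.sum_const_zero, add_zero, Finset.sum_const, hfilter,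
    Finset.card_range]
  have : ((M - u : ℕ) : ℂ) = (M:ℂ) - u := by
    have := Nat.cast_sub (le_of_lt hu) (R := ℂ)
    exact this
  rw [nsmul_eq_mul, this]
  ring


lemma fejer_sample_cos_sin (M : ℕ) (hM : 0 < M) (u : ℕ) (hu : u < M) (x : ℝ) :
    (∑ k ∈ Finset.range (2*M),
        fejer M (x - (k:ℝ)/M) * Real.cos (Real.pi * u * ((k:ℝ)/M))
       = 2*((M:ℝ) - u) * Real.cos (Real.pi * u * x))
    ∧ (∑ k ∈ Finset.range (2*M),
        fejer M (x - (k:ℝ)/M) * Real.sin (Real.pi * u * ((k:ℝ)/M))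
       = 2*((M:ℝ) - u) * Real.sin (Real.pi * u * x)) := by
  have h := fejer_sample_exp M hM u hu x
  have hterm : ∀ k : ℕ,
      (fejer M (x - (k:ℝ)/M) : ℂ) * Complex.exp ((Real.pi:ℂ) * u * ((k:ℂ)/M) * Complex.I)
      = ((fejer M (x - (k:ℝ)/M) * Real.cos (Real.pi*u*((k:ℝ)/M)) : ℝ) : ℂ)
        + ((fejer M (x - (k:ℝ)/M) * Real.sin (Real.pi*u*((k:ℝ)/M)) : ℝ) : ℂ) * Complex.I := by
    intro k
    have harg : (Real.pi:ℂ) * u * ((k:ℂ)/M) * Complex.I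
        = ((Real.pi*u*((k:ℝ)/M) : ℝ) : ℂ) * Complex.I := by push_cast; ring
    rw [harg, Complex.exp_mul_I, ← Complex.ofReal_cos, ← Complex.ofReal_sin]
    push_cast
    ring
  have hrhs : 2*((M:ℂ) - (u:ℂ)) * Complex.exp ((Real.pi:ℂ) * u * x * Complex.I)
      = ((2*((M:ℝ) - u) * Real.cos (Real.pi*u*x) : ℝ) : ℂ)
        + ((2*((M:ℝ) - u) * Real.sin (Real.pi*u*x) : ℝ) : ℂ) * Complex.I := by
    have harg : (Real.pi:ℂ) * u * x * Complex.I
        = ((Real.pi*u*x : ℝ) : ℂ) * Complex.I := by push_cast; ring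
    rw [harg, Complex.exp_mul_I, ← Complex.ofReal_cos, ← Complex.ofReal_sin]
    push_cast
    ring
  rw [Finset.sum_congr rfl (fun k _ => hterm k), hrhs, Finset.sum_add_distrib,
    ← Finset.sum_mul] at h
  rw [Complex.ext_iff] at h
  obtain ⟨h1, h2⟩ := h
  simp only [Complex.add_re, Complex.add_im, Complex.mul_re, Complex.mul_im,
    Complex.I_re, Complex.I_im, Complex.ofReal_re, Complex.ofReal_im, Complex.re_sum,
    Complex.im_sum, mul_zero, mul_one, zero_mul, sub_zero, add_zero, zero_add,
    zero_sub, neg_zero, neg_neg, mul_neg, Finset.sum_const_zero] at h1 h2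
  exact ⟨by simpa using h1, by simpa using h2⟩


lemma tf_sample (u : Fin m → ℕ) (S : Finset (Fin m)) (k : Fin m) (M : ℕ) (hM : 0 < M)
    (hu : u k < M) (t : ℝ) :
    ∑ k' ∈ Finset.range (2*M), (fejer M (t - (k':ℝ)/M) / (2*M)) * tf u S k ((k':ℝ)/M)
      = (1 - (u k : ℝ)/M) * tf u S k t := by
  have hM' : (M:ℝ) ≠ 0 := Nat.cast_ne_zero.mpr hM.ne'
  unfold tf
  by_cases h : k ∈ S <;> simp only [h, if_true, if_false]
  · have hs := (fejer_sample_cos_sin M hM (u k) hu t).2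
    have : ∑ k' ∈ Finset.range (2*M), (fejer M (t - (k':ℝ)/M) / (2*M)) *
        Real.sin (Real.pi * u k * ((k':ℝ)/M))
        = (∑ k' ∈ Finset.range (2*M), fejer M (t - (k':ℝ)/M) *
            Real.sin (Real.pi * u k * ((k':ℝ)/M))) / (2*M) := by
      rw [Finset.sum_div]
      exact Finset.sum_congr rfl fun k' _ => by ring
    rw [this, hs]
    field_simp
  · have hs := (fejer_sample_cos_sin M hM (u k) hu t).1
    have : ∑ k' ∈ Finset.range (2*M), (fejer M (t - (k':ℝ)/M) / (2*M)) *
        Real.cos (Real.pi * u k * ((k':ℝ)/M))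
        = (∑ k' ∈ Finset.range (2*M), fejer M (t - (k':ℝ)/M) *
            Real.cos (Real.pi * u k * ((k':ℝ)/M))) / (2*M) := by
      rw [Finset.sum_div]
      exact Finset.sum_congr rfl fun k' _ => by ring
    rw [this, hs]
    field_simp

lemma prod_sample (u : Fin m → ℕ) (S : Finset (Fin m)) (M : ℕ) (hM : 0 < M)
    (hu : ∀ j, u j < M) (x : Fin m → ℝ) :
    ∑ K ∈ Fintype.piFinset (fun _ : Fin m => Finset.range (2*M)),
      (∏ j, (fejer M (x j - (K j : ℝ)/M) / (2*M))) * trigP u S (fun j => (K j : ℝ)/M)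
      = (∏ j, (1 - (u j : ℝ)/M)) * trigP u S x := by
  have h1 : ∀ K ∈ Fintype.piFinset (fun _ : Fin m => Finset.range (2*M)),
      (∏ j, (fejer M (x j - (K j : ℝ)/M) / (2*M))) * trigP u S (fun j => (K j : ℝ)/M)
      = ∏ j, ((fejer M (x j - (K j : ℝ)/M) / (2*M)) * tf u S j ((K j : ℝ)/M)) := by
    intro K _
    rw [trigP, ← Finset.prod_mul_distrib]
  rw [Finset.sum_congr rfl h1,
    ← Finset.prod_univ_sum (fun _ : Fin m => Finset.range (2*M))
      (fun j k' => (fejer M (x j - (k':ℝ)/M) / (2*M)) * tf u S j ((k':ℝ)/M))]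
  rw [Finset.prod_congr rfl (fun j (_ : j ∈ Finset.univ) => tf_sample u S j M hM (hu j) (x j)),
    Finset.prod_mul_distrib]
  rfl

lemma weights_sum (M : ℕ) (hM : 0 < M) (x : Fin m → ℝ) :
    ∑ K ∈ Fintype.piFinset (fun _ : Fin m => Finset.range (2*M)),
      (∏ j, (fejer M (x j - (K j : ℝ)/M) / (2*M))) = 1 := by
  have := prod_sample (m := m) (fun _ => 0) ∅ M hM (fun _ => hM) x
  simpa [trigP, tf] using this


lemma kmap_cancel {U : Finset (Fin m → ℕ)} (θ : U → ℝ) (M : ℕ) (hM : 0 < M) (u : U)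
    (hu : ∀ j, u.1 j < M) :
    kmap m U M θ u * ∏ j, (1 - (u.1 j : ℝ)/M) = θ u := by
  unfold kmap
  rw [div_mul_cancel₀]
  rw [Finset.prod_ne_zero_iff]
  intro j _
  have : ((u.1 j : ℝ))/M < 1 := by
    rw [div_lt_one (by exact_mod_cast hM)]
    exact_mod_cast hu j
  intro hc
  rw [sub_eq_zero] at hc
  exact absurd hc.symm (ne_of_lt this)

lemma hessian_convex {U : Finset (Fin m → ℕ)} (θ : U → ℝ) (M : ℕ) (hM : 0 < M)
    (hu : ∀ u ∈ U, ∀ j, u j < M) (x : Fin m → ℝ) (i j : Fin m) :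
    hessian m (sgmPotential m U θ) x i j
      = ∑ K ∈ Fintype.piFinset (fun _ : Fin m => Finset.range (2*M)),
          (∏ l, (fejer M (x l - (K l : ℝ)/M) / (2*M))) *
            hessian m (sgmPotential m U (kmap m U M θ)) (fun l => (K l : ℝ)/M) i j := by
  have key : ∀ (c : ℝ) (S : Finset (Fin m)) (u : U),
      ∑ K ∈ Fintype.piFinset (fun _ : Fin m => Finset.range (2*M)),
        (∏ l, (fejer M (x l - (K l : ℝ)/M) / (2*M))) * (c * trigP u.1 S (fun l => (K l : ℝ)/M))
      = c * ((∏ l, (1 - (u.1 l : ℝ)/M)) * trigP u.1 S x) := by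
    intro c S u
    rw [← prod_sample u.1 S M hM (fun l => hu u.1 u.2 l) x, Finset.mul_sum]
    exact Finset.sum_congr rfl fun K _ => by ring
  simp only [hessian_sgm_apply]
  rw [eq_comm]
  calc ∑ K ∈ Fintype.piFinset (fun _ : Fin m => Finset.range (2*M)),
        (∏ l, (fejer M (x l - (K l : ℝ)/M) / (2*M))) *
          ((if i = j then (1:ℝ) else 0) + ∑ u : U, kmap m U M θ u * u.1 i * u.1 j *
            (if i = j then trigP u.1 ∅ (fun l => (K l : ℝ)/M)
             else - trigP u.1 {i, j} (fun l => (K l : ℝ)/M)))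
      = ∑ K ∈ Fintype.piFinset (fun _ : Fin m => Finset.range (2*M)),
          ((∏ l, (fejer M (x l - (K l : ℝ)/M) / (2*M))) * (if i = j then (1:ℝ) else 0)
           + ∑ u : U, (∏ l, (fejer M (x l - (K l : ℝ)/M) / (2*M))) *
              (kmap m U M θ u * u.1 i * u.1 j *
                (if i = j then trigP u.1 ∅ (fun l => (K l : ℝ)/M)
                 else - trigP u.1 {i, j} (fun l => (K l : ℝ)/M)))) := by
        refine Finset.sum_congr rfl fun K _ => ?_
        rw [mul_add, Finset.mul_sum]
    _ = (if i = j then (1:ℝ) else 0)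
          + ∑ u : U, ∑ K ∈ Fintype.piFinset (fun _ : Fin m => Finset.range (2*M)),
              (∏ l, (fejer M (x l - (K l : ℝ)/M) / (2*M))) *
                (kmap m U M θ u * u.1 i * u.1 j *
                  (if i = j then trigP u.1 ∅ (fun l => (K l : ℝ)/M)
                   else - trigP u.1 {i, j} (fun l => (K l : ℝ)/M))) := by
        rw [Finset.sum_add_distrib, ← Finset.sum_mul, weights_sum M hM x, one_mul,
          Finset.sum_comm]
    _ = (if i = j then (1:ℝ) else 0) + ∑ u : U, θ u * u.1 i * u.1 j *
          (if i = j then trigP u.1 ∅ x else - trigP u.1 {i, j} x) := by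
        congr 1
        refine Finset.sum_congr rfl fun u _ => ?_
        by_cases hij : i = j
        · simp only [hij, if_true]
          rw [key (kmap m U M θ u * u.1 j * u.1 j) ∅ u]
          rw [← kmap_cancel θ M hM u (fun l => hu u.1 u.2 l)]
          ring
        · simp only [hij, if_false]
          have : ∑ K ∈ Fintype.piFinset (fun _ : Fin m => Finset.range (2*M)),
              (∏ l, (fejer M (x l - (K l : ℝ)/M) / (2*M))) *
                (kmap m U M θ u * u.1 i * u.1 j * - trigP u.1 {i, j} (fun l => (K l : ℝ)/M))
              = - ∑ K ∈ Fintype.piFinset (fun _ : Fin m => Finset.range (2*M)),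
                  (∏ l, (fejer M (x l - (K l : ℝ)/M) / (2*M))) *
                    ((kmap m U M θ u * u.1 i * u.1 j) * trigP u.1 {i, j} (fun l => (K l : ℝ)/M)) := by
            rw [← Finset.sum_neg_distrib]
            exact Finset.sum_congr rfl fun K _ => by ring
          rw [this, key (kmap m U M θ u * u.1 i * u.1 j) {i, j} u]
          rw [← kmap_cancel θ M hM u (fun l => hu u.1 u.2 l)]
          ring


lemma cos_reflect (u K M : ℕ) (hM : 0 < M) (hK : K ≤ 2*M) :
    Real.cos (Real.pi * u * (((2*M - K : ℕ):ℝ)/M)) = Real.cos (Real.pi * u * ((K:ℝ)/M)) := by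
  have hM' : (M:ℝ) ≠ 0 := Nat.cast_ne_zero.mpr hM.ne'
  have harg : Real.pi * u * (((2*M - K : ℕ):ℝ)/M)
      = (u:ℝ)*(2*Real.pi) - Real.pi * u * ((K:ℝ)/M) := by
    rw [Nat.cast_sub hK]
    push_cast
    field_simp
  have hsin : Real.sin ((u:ℝ)*(2*Real.pi)) = 0 := by
    have : (u:ℝ)*(2*Real.pi) = (2*u : ℕ) * Real.pi := by push_cast; ring
    rw [this, Real.sin_nat_mul_pi]
  rw [harg, Real.cos_sub, Real.cos_nat_mul_two_pi, hsin]
  ring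

lemma sin_reflect (u K M : ℕ) (hM : 0 < M) (hK : K ≤ 2*M) :
    Real.sin (Real.pi * u * (((2*M - K : ℕ):ℝ)/M)) = - Real.sin (Real.pi * u * ((K:ℝ)/M)) := by
  have hM' : (M:ℝ) ≠ 0 := Nat.cast_ne_zero.mpr hM.ne'
  have harg : Real.pi * u * (((2*M - K : ℕ):ℝ)/M)
      = (u:ℝ)*(2*Real.pi) - Real.pi * u * ((K:ℝ)/M) := by
    rw [Nat.cast_sub hK]
    push_cast
    field_simp
  have hsin : Real.sin ((u:ℝ)*(2*Real.pi)) = 0 := by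
    have : (u:ℝ)*(2*Real.pi) = (2*u : ℕ) * Real.pi := by push_cast; ring
    rw [this, Real.sin_nat_mul_pi]
  rw [harg, Real.sin_sub, Real.cos_nat_mul_two_pi, hsin]
  ring

/-- reflected grid index -/
def reflK (M : ℕ) (K : Fin m → ℕ) (l : Fin m) : ℕ := if K l ≤ M then K l else 2*M - K l

/-- reflection signs -/
def reflE (M : ℕ) (K : Fin m → ℕ) (l : Fin m) : ℝ := if K l ≤ M then 1 else -1

lemma tf_reflect (u : Fin m → ℕ) (S : Finset (Fin m)) (M : ℕ) (hM : 0 < M)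
    (K : Fin m → ℕ) (hK : ∀ l, K l < 2*M) (l : Fin m) :
    tf u S l ((K l : ℝ)/M)
      = (if l ∈ S then reflE M K l else 1) * tf u S l ((reflK M K l : ℝ)/M) := by
  unfold tf reflE reflK
  by_cases hl : l ∈ S <;> by_cases hKl : K l ≤ M <;>
    simp only [hl, hKl, if_true, if_false, one_mul]
  · rw [sin_reflect (u l) (K l) M hM (le_of_lt (hK l))]
    ring
  · rw [cos_reflect (u l) (K l) M hM (le_of_lt (hK l))]

lemma trigP_empty_reflect (u : Fin m → ℕ) (M : ℕ) (hM : 0 < M)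
    (K : Fin m → ℕ) (hK : ∀ l, K l < 2*M) :
    trigP u ∅ (fun l => (K l : ℝ)/M) = trigP u ∅ (fun l => (reflK M K l : ℝ)/M) := by
  unfold trigP
  refine Finset.prod_congr rfl fun l _ => ?_
  simpa using tf_reflect u ∅ M hM K hK l

lemma trigP_pair_reflect (u : Fin m → ℕ) (M : ℕ) (hM : 0 < M)
    (K : Fin m → ℕ) (hK : ∀ l, K l < 2*M) (i j : Fin m) (hij : i ≠ j) :
    trigP u {i, j} (fun l => (K l : ℝ)/M)
      = (reflE M K i * reflE M K j) * trigP u {i, j} (fun l => (reflK M K l : ℝ)/M) := by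
  unfold trigP
  rw [Finset.prod_congr rfl (fun l (_ : l ∈ Finset.univ) => tf_reflect u {i,j} M hM K hK l),
    Finset.prod_mul_distrib, Finset.prod_ite_mem, Finset.univ_inter, Finset.prod_pair hij]

lemma reflE_ne_zero (M : ℕ) (K : Fin m → ℕ) (l : Fin m) : reflE M K l ≠ 0 := by
  unfold reflE
  split <;> norm_num

lemma reflE_sq (M : ℕ) (K : Fin m → ℕ) (l : Fin m) : reflE M K l * reflE M K l = 1 := by
  unfold reflE
  split <;> norm_num

set_option maxHeartbeats 1000000 in
lemma hessian_reflect {U : Finset (Fin m → ℕ)} (θ : U → ℝ) (M : ℕ) (hM : 0 < M)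
    (K : Fin m → ℕ) (hK : ∀ l, K l < 2*M) (i j : Fin m) :
    hessian m (sgmPotential m U θ) (fun l => (K l : ℝ)/M) i j
      = reflE M K i * reflE M K j *
        hessian m (sgmPotential m U θ) (fun l => (reflK M K l : ℝ)/M) i j := by
  rw [hessian_sgm_apply, hessian_sgm_apply]
  by_cases hij : i = j
  · subst hij
    simp only [if_true]
    simp only [reflE_sq M K i, one_mul]
    congr 1
    refine Finset.sum_congr rfl fun u _ => ?_
    rw [trigP_empty_reflect u.1 M hM K hK]
  · simp only [hij, if_false, zero_add, Finset.mul_sum]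
    refine Finset.sum_congr rfl fun u _ => ?_
    rw [trigP_pair_reflect u.1 M hM K hK i j hij]
    ring


lemma hessian_symm_entry {U : Finset (Fin m → ℕ)} (θ : U → ℝ) (x : Fin m → ℝ) (i j : Fin m) :
    hessian m (sgmPotential m U θ) x i j = hessian m (sgmPotential m U θ) x j i := by
  rw [hessian_sgm_apply, hessian_sgm_apply]
  by_cases hij : i = j
  · subst hij; rfl
  · have hji : ¬ j = i := fun h => hij h.symm
    simp only [hij, hji, if_false]
    congr 1
    refine Finset.sum_congr rfl fun u _ => ?_
    rw [Finset.pair_comm i j]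
    ring

lemma hessian_isHermitian {U : Finset (Fin m → ℕ)} (θ : U → ℝ) (x : Fin m → ℝ) :
    (hessian m (sgmPotential m U θ) x).IsHermitian := by
  rw [Matrix.IsHermitian]
  ext i j
  rw [Matrix.conjTranspose_apply]
  simpa using hessian_symm_entry θ x j i

lemma quad_expand (A : Matrix (Fin m) (Fin m) ℝ) (v : Fin m → ℝ) :
    dotProduct v (A.mulVec v) = ∑ i, ∑ j, v i * A i j * v j := by
  unfold dotProduct Matrix.mulVec dotProduct
  refine Finset.sum_congr rfl fun i _ => ?_
  rw [Finset.mul_sum]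
  exact Finset.sum_congr rfl fun j _ => by ring

lemma posdef_grid_extend {U : Finset (Fin m → ℕ)} (θ' : U → ℝ) (M : ℕ) (hM : 0 < M)
    (hgrid : ∀ ξ : Fin m → ℝ, (∀ j, ∃ k : ℕ, k ≤ M ∧ ξ j = (k : ℝ) / M) →
      (hessian m (sgmPotential m U θ') ξ).PosDef)
    (K : Fin m → ℕ) (hK : ∀ l, K l < 2*M) :
    0 < 1 → ∀ v : Fin m → ℝ, v ≠ 0 →
      0 < dotProduct v ((hessian m (sgmPotential m U θ') (fun l => (K l : ℝ)/M)).mulVec v) := by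
  intro _ v hv
  have hK'le : ∀ l, reflK M K l ≤ M := by
    intro l
    unfold reflK
    split
    · assumption
    · omega
  have hpd := hgrid (fun l => (reflK M K l : ℝ)/M) (fun l => ⟨reflK M K l, hK'le l, rfl⟩)
  set v' : Fin m → ℝ := fun l => reflE M K l * v l with hv'
  have hv'0 : v' ≠ 0 := by
    intro h
    apply hv
    funext l
    have := congrFun h l
    simp only [hv', Pi.zero_apply] at this ⊢
    rcases mul_eq_zero.mp this with h1 | h1
    · exact absurd h1 (reflE_ne_zero M K l)
    · exact h1
  have hq := hpd.dotProduct_mulVec_pos hv'0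
  have hqq : 0 < dotProduct v'
      ((hessian m (sgmPotential m U θ') (fun l => (reflK M K l : ℝ)/M)).mulVec v') := by
    simpa using hq
  rw [quad_expand] at hqq ⊢
  have heq : ∑ i, ∑ j, v i * hessian m (sgmPotential m U θ') (fun l => (K l : ℝ)/M) i j * v j
      = ∑ i, ∑ j, v' i * hessian m (sgmPotential m U θ') (fun l => (reflK M K l : ℝ)/M) i j * v' j := by
    refine Finset.sum_congr rfl fun i _ => Finset.sum_congr rfl fun j _ => ?_
    rw [hessian_reflect θ' M hM K hK i j, hv']
    ring
  rw [heq]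
  exact hqq

/-- The hard direction: membership in one inner approximation implies positive
definiteness everywhere. -/
lemma posdef_everywhere {U : Finset (Fin m → ℕ)} (θ : U → ℝ) (M : ℕ) (hM : 0 < M)
    (hu : ∀ u ∈ U, ∀ j, u j < M)
    (hgrid : ∀ ξ : Fin m → ℝ, (∀ j, ∃ k : ℕ, k ≤ M ∧ ξ j = (k : ℝ) / M) →
      (hessian m (sgmPotential m U (kmap m U M θ)) ξ).PosDef)
    (x : Fin m → ℝ) :
    (hessian m (sgmPotential m U θ) x).PosDef := by
  refine Matrix.PosDef.of_dotProduct_mulVec_pos (hessian_isHermitian θ x) ?_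
  intro v hv
  have hsplit : dotProduct v ((hessian m (sgmPotential m U θ) x).mulVec v)
      = ∑ K ∈ Fintype.piFinset (fun _ : Fin m => Finset.range (2*M)),
          (∏ l, (fejer M (x l - (K l : ℝ)/M) / (2*M))) *
            dotProduct v
              ((hessian m (sgmPotential m U (kmap m U M θ)) (fun l => (K l : ℝ)/M)).mulVec v) := by
    rw [quad_expand]
    have h1 : ∀ i ∈ Finset.univ, ∀ j ∈ (Finset.univ : Finset (Fin m)),
        v i * hessian m (sgmPotential m U θ) x i j * v j
        = ∑ K ∈ Fintype.piFinset (fun _ : Fin m => Finset.range (2*M)),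
            (∏ l, (fejer M (x l - (K l : ℝ)/M) / (2*M))) *
              (v i * hessian m (sgmPotential m U (kmap m U M θ)) (fun l => (K l : ℝ)/M) i j * v j) := by
      intro i _ j _
      rw [hessian_convex θ M hM hu x i j, Finset.mul_sum, Finset.sum_mul]
      exact Finset.sum_congr rfl fun K _ => by ring
    rw [Finset.sum_congr rfl fun i hi => Finset.sum_congr rfl fun j hj => h1 i hi j hj]
    have h2 : ∀ K ∈ Fintype.piFinset (fun _ : Fin m => Finset.range (2*M)),
        (∏ l, (fejer M (x l - (K l : ℝ)/M) / (2*M))) *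
          dotProduct v
            ((hessian m (sgmPotential m U (kmap m U M θ)) (fun l => (K l : ℝ)/M)).mulVec v)
        = ∑ i, ∑ j, (∏ l, (fejer M (x l - (K l : ℝ)/M) / (2*M))) *
            (v i * hessian m (sgmPotential m U (kmap m U M θ)) (fun l => (K l : ℝ)/M) i j * v j) := by
      intro K _
      rw [quad_expand, Finset.mul_sum]
      exact Finset.sum_congr rfl fun i _ => by rw [Finset.mul_sum]
    rw [Finset.sum_congr rfl h2]
    exact (Finset.sum_congr rfl fun i _ => Finset.sum_comm).trans Finset.sum_comm
  simp only [star_trivial]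
  rw [hsplit]
  have hwnn : ∀ K : Fin m → ℕ, 0 ≤ ∏ l, (fejer M (x l - (K l : ℝ)/M) / (2*M)) :=
    fun K => Finset.prod_nonneg fun l _ => div_nonneg (fejer_nonneg _ _) (by positivity)
  have hqpos : ∀ K ∈ Fintype.piFinset (fun _ : Fin m => Finset.range (2*M)),
      0 < dotProduct v
        ((hessian m (sgmPotential m U (kmap m U M θ)) (fun l => (K l : ℝ)/M)).mulVec v) := by
    intro K hKmem
    have hKlt : ∀ l, K l < 2*M := by
      intro l
      have := Fintype.mem_piFinset.mp hKmem l
      simpa [Finset.mem_range] using this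
    exact posdef_grid_extend (kmap m U M θ) M hM hgrid K hKlt one_pos v hv
  apply Finset.sum_pos'
  · exact fun K hK => mul_nonneg (hwnn K) (le_of_lt (hqpos K hK))
  · have hex : ∃ K ∈ Fintype.piFinset (fun _ : Fin m => Finset.range (2*M)),
        0 < ∏ l, (fejer M (x l - (K l : ℝ)/M) / (2*M)) := by
      by_contra hcon
      push_neg at hcon
      have hle : ∑ K ∈ Fintype.piFinset (fun _ : Fin m => Finset.range (2*M)),
          (∏ l, (fejer M (x l - (K l : ℝ)/M) / (2*M))) ≤ 0 :=
        Finset.sum_nonpos fun K hK => hcon K hK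
      rw [weights_sum M hM x] at hle
      linarith
    obtain ⟨K₀, hK₀mem, hK₀⟩ := hex
    exact ⟨K₀, hK₀mem, mul_pos hK₀ (hqpos K₀ hK₀mem)⟩


lemma abs_trigP_le_one (u : Fin m → ℕ) (S : Finset (Fin m)) (x : Fin m → ℝ) :
    |trigP u S x| ≤ 1 := by
  rw [trigP, Finset.abs_prod]
  refine Finset.prod_le_one (fun k _ => abs_nonneg _) (fun k _ => ?_)
  unfold tf
  split
  · exact Real.abs_sin_le_one _
  · exact Real.abs_cos_le_one _

lemma quad_diff_bound {U : Finset (Fin m → ℕ)} (θ θ' : U → ℝ) (x v : Fin m → ℝ)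
    (hv : ∀ i, |v i| ≤ 1) :
    |(∑ i, ∑ j, v i * hessian m (sgmPotential m U θ') x i j * v j)
      - ∑ i, ∑ j, v i * hessian m (sgmPotential m U θ) x i j * v j|
      ≤ ∑ u : U, |θ' u - θ u| * (∑ i, (u.1 i : ℝ))^2 := by
  have hdiff : (∑ i, ∑ j, v i * hessian m (sgmPotential m U θ') x i j * v j)
      - (∑ i, ∑ j, v i * hessian m (sgmPotential m U θ) x i j * v j)
      = ∑ i, ∑ j, ∑ u : U, ((θ' u - θ u) * ((u.1 i : ℝ) * (u.1 j : ℝ))) *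
          (v i * v j * (if i = j then trigP u.1 ∅ x else - trigP u.1 {i, j} x)) := by
    rw [← Finset.sum_sub_distrib]
    refine Finset.sum_congr rfl fun i _ => ?_
    rw [← Finset.sum_sub_distrib]
    refine Finset.sum_congr rfl fun j _ => ?_
    rw [hessian_sgm_apply, hessian_sgm_apply]
    have : ∀ (a b c : ℝ), v i * (a + b) * v j - v i * (a + c) * v j
        = v i * v j * (b - c) := by intro a b c; ring
    rw [this, ← Finset.sum_sub_distrib, Finset.mul_sum]
    refine Finset.sum_congr rfl fun u _ => by ring
  rw [hdiff]
  have habs : ∀ i j : Fin m, ∀ u : U,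
      |((θ' u - θ u) * ((u.1 i : ℝ) * (u.1 j : ℝ))) *
          (v i * v j * (if i = j then trigP u.1 ∅ x else - trigP u.1 {i, j} x))|
        ≤ |θ' u - θ u| * ((u.1 i : ℝ) * (u.1 j : ℝ)) := by
    intro i j u
    rw [abs_mul, abs_mul]
    have h1 : |(u.1 i : ℝ) * (u.1 j : ℝ)| = (u.1 i : ℝ) * (u.1 j : ℝ) :=
      abs_of_nonneg (mul_nonneg (Nat.cast_nonneg _) (Nat.cast_nonneg _))
    rw [h1]
    have h2 : |v i * v j * (if i = j then trigP u.1 ∅ x else - trigP u.1 {i, j} x)| ≤ 1 := by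
      rw [abs_mul, abs_mul]
      have hT : |(if i = j then trigP u.1 ∅ x else - trigP u.1 {i, j} x)| ≤ 1 := by
        split
        · exact abs_trigP_le_one _ _ _
        · rw [abs_neg]; exact abs_trigP_le_one _ _ _
      have := mul_le_one₀ (mul_le_one₀ (hv i) (abs_nonneg _) (hv j)) (abs_nonneg _) hT
      simpa using this
    exact mul_le_of_le_one_right
      (mul_nonneg (abs_nonneg _) (mul_nonneg (Nat.cast_nonneg _) (Nat.cast_nonneg _))) h2
  calc |∑ i, ∑ j, ∑ u : U, ((θ' u - θ u) * ((u.1 i : ℝ) * (u.1 j : ℝ))) *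
          (v i * v j * (if i = j then trigP u.1 ∅ x else - trigP u.1 {i, j} x))|
      ≤ ∑ i, |∑ j, ∑ u : U, ((θ' u - θ u) * ((u.1 i : ℝ) * (u.1 j : ℝ))) *
          (v i * v j * (if i = j then trigP u.1 ∅ x else - trigP u.1 {i, j} x))| :=
        Finset.abs_sum_le_sum_abs _ _
    _ ≤ ∑ i, ∑ j, |∑ u : U, ((θ' u - θ u) * ((u.1 i : ℝ) * (u.1 j : ℝ))) *
          (v i * v j * (if i = j then trigP u.1 ∅ x else - trigP u.1 {i, j} x))| :=
        Finset.sum_le_sum fun i _ => Finset.abs_sum_le_sum_abs _ _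
    _ ≤ ∑ i, ∑ j, ∑ u : U, |((θ' u - θ u) * ((u.1 i : ℝ) * (u.1 j : ℝ))) *
          (v i * v j * (if i = j then trigP u.1 ∅ x else - trigP u.1 {i, j} x))| :=
        Finset.sum_le_sum fun i _ => Finset.sum_le_sum fun j _ =>
          Finset.abs_sum_le_sum_abs _ _
    _ ≤ ∑ i, ∑ j, ∑ u : U, |θ' u - θ u| * ((u.1 i : ℝ) * (u.1 j : ℝ)) :=
        Finset.sum_le_sum fun i _ => Finset.sum_le_sum fun j _ =>
          Finset.sum_le_sum fun u _ => habs i j u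
    _ = ∑ u : U, |θ' u - θ u| * (∑ i, (u.1 i : ℝ))^2 := by
        refine ((Finset.sum_congr rfl fun i (_ : i ∈ Finset.univ) =>
          Finset.sum_comm).trans Finset.sum_comm).trans ?_
        refine Finset.sum_congr rfl fun u _ => ?_
        have h4 : ∑ i : Fin m, ∑ j : Fin m, |θ' u - θ u| * ((u.1 i : ℝ) * (u.1 j : ℝ))
            = |θ' u - θ u| * ((∑ i, (u.1 i : ℝ)) * (∑ j, (u.1 j : ℝ))) := by
          rw [Finset.sum_mul_sum, Finset.mul_sum]
          refine Finset.sum_congr rfl fun i _ => ?_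
          rw [Finset.mul_sum]
        rw [h4, sq]
  

lemma continuous_trigP (u : Fin m → ℕ) (S : Finset (Fin m)) :
    Continuous (trigP u S) := by
  unfold trigP
  apply continuous_finset_prod
  intro k _
  unfold tf
  by_cases hk : k ∈ S <;> simp only [hk, if_true, if_false]
  · exact Real.continuous_sin.comp (continuous_const.mul (continuous_apply k))
  · exact Real.continuous_cos.comp (continuous_const.mul (continuous_apply k))

lemma posDef_of_unit (A : Matrix (Fin m) (Fin m) ℝ) (hA : A.IsHermitian)
    (h : ∀ v : Fin m → ℝ, ‖v‖ = 1 → 0 < dotProduct v (A.mulVec v)) : A.PosDef := by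
  refine Matrix.PosDef.of_dotProduct_mulVec_pos hA fun v hv => ?_
  have hn : ‖v‖ ≠ 0 := norm_ne_zero_iff.mpr hv
  have hpos : 0 < ‖v‖ := norm_pos_iff.mpr hv
  set w : Fin m → ℝ := ‖v‖⁻¹ • v with hw
  have hwn : ‖w‖ = 1 := by
    rw [hw, norm_smul, norm_inv, norm_norm, inv_mul_cancel₀ hn]
  have hvw : v = ‖v‖ • w := by rw [hw, smul_smul, mul_inv_cancel₀ hn, one_smul]
  have hq := h w hwn
  simp only [star_trivial]
  have hsmul : dotProduct v (A.mulVec v)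
      = (‖v‖ * ‖v‖) * dotProduct w (A.mulVec w) := by
    conv_lhs => rw [hvw]
    rw [Matrix.mulVec_smul, smul_dotProduct, dotProduct_smul,
      smul_eq_mul, smul_eq_mul]
    ring
  rw [hsmul]
  exact mul_pos (mul_pos hpos hpos) hq

lemma exists_unit_min {U : Finset (Fin m → ℕ)} (θ : U → ℝ) (hm : 0 < m)
    (hpd : ∀ x ∈ Set.Icc (0 : Fin m → ℝ) 1, (hessian m (sgmPotential m U θ) x).PosDef) :
    ∃ ε > (0:ℝ), ∀ x ∈ Set.Icc (0 : Fin m → ℝ) 1, ∀ v : Fin m → ℝ, ‖v‖ = 1 →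
      ε ≤ ∑ i, ∑ j, v i * hessian m (sgmPotential m U θ) x i j * v j := by
  set Q : ((Fin m → ℝ) × (Fin m → ℝ)) → ℝ := fun p =>
    ∑ i, ∑ j, p.2 i * ((if i = j then (1:ℝ) else 0)
      + ∑ u : U, θ u * u.1 i * u.1 j *
          (if i = j then trigP u.1 ∅ p.1 else - trigP u.1 {i, j} p.1)) * p.2 j with hQdef
  have hQeq : ∀ p : ((Fin m → ℝ) × (Fin m → ℝ)),
      Q p = ∑ i, ∑ j, p.2 i * hessian m (sgmPotential m U θ) p.1 i j * p.2 j := by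
    intro p
    refine Finset.sum_congr rfl fun i _ => Finset.sum_congr rfl fun j _ => ?_
    rw [hessian_sgm_apply]
  have hQC : Continuous Q := by
    apply continuous_finset_sum
    intro i _
    apply continuous_finset_sum
    intro j _
    refine (Continuous.mul ?_ ?_).mul ((continuous_apply j).comp continuous_snd)
    · exact (continuous_apply i).comp continuous_snd
    · refine continuous_const.add (continuous_finset_sum _ fun u _ => ?_)
      refine continuous_const.mul ?_
      by_cases hij : i = j <;> simp only [hij, if_true, if_false]
      · exact (continuous_trigP u.1 ∅).comp continuous_fst
      · exact ((continuous_trigP u.1 {i,j}).comp continuous_fst).neg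
  have hKc : IsCompact ((Set.Icc (0 : Fin m → ℝ) 1) ×ˢ Metric.sphere (0 : Fin m → ℝ) 1) :=
    isCompact_Icc.prod (isCompact_sphere 0 1)
  haveI : Nontrivial (Fin m → ℝ) := by
    refine ⟨Pi.single ⟨0, hm⟩ 1, 0, fun h => ?_⟩
    have := congrFun h ⟨0, hm⟩
    simp at this
  have hne : ((Set.Icc (0 : Fin m → ℝ) 1) ×ˢ Metric.sphere (0 : Fin m → ℝ) 1).Nonempty := by
    refine Set.Nonempty.prod ⟨0, ?_⟩ (NormedSpace.sphere_nonempty.mpr zero_le_one)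
    exact Set.mem_Icc.mpr ⟨le_refl _, zero_le_one⟩
  obtain ⟨p₀, hp₀K, hmin⟩ := hKc.exists_isMinOn hne hQC.continuousOn
  obtain ⟨hp₁, hp₂⟩ := Set.mem_prod.mp hp₀K
  have hp₂n : ‖p₀.2‖ = 1 := by simpa using hp₂
  have hp₂0 : p₀.2 ≠ 0 := by
    intro h
    rw [h] at hp₂n
    simp at hp₂n
  refine ⟨Q p₀, ?_, ?_⟩
  · have := (hpd p₀.1 hp₁).dotProduct_mulVec_pos hp₂0
    have hq : 0 < dotProduct p₀.2
        ((hessian m (sgmPotential m U θ) p₀.1).mulVec p₀.2) := by simpa using this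
    rw [hQeq, ← quad_expand]
    exact hq
  · intro x hx v hv
    have hmem : (x, v) ∈ (Set.Icc (0 : Fin m → ℝ) 1) ×ˢ Metric.sphere (0 : Fin m → ℝ) 1 := by
      refine Set.mem_prod.mpr ⟨hx, ?_⟩
      simpa using hv
    have h5 : Q p₀ ≤ Q (x, v) := isMinOn_iff.mp hmin (x, v) hmem
    rw [hQeq (x, v)] at h5
    simpa using h5

lemma tendsto_D {U : Finset (Fin m → ℕ)} (θ : U → ℝ) :
    Filter.Tendsto (fun M : ℕ => ∑ u : U, |kmap m U M θ u - θ u| * (∑ i, (u.1 i : ℝ))^2)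
      Filter.atTop (nhds 0) := by
  have h0 : (0:ℝ) = ∑ u : U, (0:ℝ) := by simp
  rw [h0]
  apply tendsto_finset_sum
  intro u _
  have hP : Filter.Tendsto (fun M : ℕ => ∏ j, (1 - (u.1 j : ℝ) / M))
      Filter.atTop (nhds 1) := by
    have : (1:ℝ) = ∏ j : Fin m, (1:ℝ) := by simp
    rw [this]
    apply tendsto_finset_prod
    intro j _
    have := (tendsto_const_div_atTop_nhds_zero_nat ((u.1 j : ℝ))).const_sub 1
    simpa using this
  have hk : Filter.Tendsto (fun M : ℕ => kmap m U M θ u - θ u) Filter.atTop (nhds 0) := by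
    have hdiv : Filter.Tendsto (fun M : ℕ => θ u / ∏ j, (1 - (u.1 j : ℝ) / M))
        Filter.atTop (nhds (θ u)) := by
      have := Filter.Tendsto.div (tendsto_const_nhds (x := θ u)) hP one_ne_zero
      rw [div_one] at this; exact this
    have := hdiv.sub (tendsto_const_nhds (x := θ u))
    simpa [kmap] using this
  have := (hk.abs).mul_const ((∑ i, (u.1 i : ℝ))^2)
  simpa using this


lemma easy_direction {U : Finset (Fin m → ℕ)} (θ : U → ℝ) (hm : 0 < m)
    (hpd : ∀ x ∈ Set.Icc (0 : Fin m → ℝ) 1, (hessian m (sgmPotential m U θ) x).PosDef)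
    (M' : ℕ) :
    ∃ M : ℕ, (M' ≤ M ∧ ∀ u ∈ U, ∀ j, u j < M) ∧
      ∀ ξ : Fin m → ℝ, (∀ j, ∃ k : ℕ, k ≤ M ∧ ξ j = (k : ℝ)/M) →
        (hessian m (sgmPotential m U (kmap m U M θ)) ξ).PosDef := by
  obtain ⟨ε, hε, hmin⟩ := exists_unit_min θ hm hpd
  set B := U.sup (fun u => Finset.univ.sup u) with hB
  have hBle : ∀ u ∈ U, ∀ j, u j ≤ B := fun u hu j =>
    le_trans (Finset.le_sup (Finset.mem_univ j)) (Finset.le_sup hu)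
  have hev : ∀ᶠ M : ℕ in Filter.atTop,
      (∑ u : U, |kmap m U M θ u - θ u| * (∑ i, (u.1 i : ℝ))^2) < ε :=
    (tendsto_D θ).eventually_lt_const hε
  obtain ⟨M, hMev⟩ := (hev.and (Filter.eventually_ge_atTop (max M' (B+1)))).exists
  obtain ⟨hMa, hMb⟩ := hMev
  have hM' : M' ≤ M := le_trans (le_max_left _ _) hMb
  have hBM : B + 1 ≤ M := le_trans (le_max_right _ _) hMb
  have hult : ∀ u ∈ U, ∀ j, u j < M := fun u hu j =>
    lt_of_le_of_lt (hBle u hu j) (lt_of_lt_of_le (Nat.lt_succ_self B) hBM)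
  have hM0 : 0 < M := lt_of_lt_of_le (Nat.succ_pos B) hBM
  refine ⟨M, ⟨hM', hult⟩, ?_⟩
  intro ξ hξ
  have hξIcc : ξ ∈ Set.Icc (0 : Fin m → ℝ) 1 := by
    rw [Set.mem_Icc]
    constructor <;> intro j
    · obtain ⟨k, hk, hkeq⟩ := hξ j
      rw [hkeq]
      positivity
    · obtain ⟨k, hk, hkeq⟩ := hξ j
      rw [hkeq]
      show (k : ℝ)/M ≤ 1
      rw [div_le_one (by exact_mod_cast hM0)]
      exact_mod_cast hk
  refine posDef_of_unit _ (hessian_isHermitian _ _) ?_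
  intro v hv
  have hvi : ∀ i, |v i| ≤ 1 := fun i => by
    have h1 := norm_le_pi_norm v i
    rw [hv] at h1
    simpa using h1
  have hbound := quad_diff_bound θ (kmap m U M θ) ξ v hvi
  have hbase := hmin ξ hξIcc v hv
  rw [quad_expand]
  have hneg := neg_abs_le
    ((∑ i, ∑ j, v i * hessian m (sgmPotential m U (kmap m U M θ)) ξ i j * v j)
      - ∑ i, ∑ j, v i * hessian m (sgmPotential m U θ) ξ i j * v j)
  linarith

end SGMaux

/-- The interior Θ° of the feasible region equals the limit superior of the inner
approximations Θ_M° as M → ∞. -/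
theorem interior_eq_limsup_inner_approx (m : ℕ) (hm : 0 < m)
    (U : Finset (Fin m → ℕ)) :
    {θ : U → ℝ | ∀ x ∈ Set.Icc (0 : Fin m → ℝ) 1,
        (hessian m (sgmPotential m U θ) x).PosDef}
      = ⋂ M' : ℕ, ⋃ M : ℕ,
          ⋃ (_ : M' ≤ M ∧ ∀ u ∈ U, ∀ j, u j < M), innerApprox m U M := by
  ext θ
  simp only [Set.mem_setOf_eq, Set.mem_iInter, Set.mem_iUnion]
  constructor
  · intro h M'
    obtain ⟨M, hM, hgrid⟩ := SGMaux.easy_direction θ hm h M'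
    exact ⟨M, hM, hgrid⟩
  · intro h x _
    obtain ⟨M, hMp, hmem⟩ := h 1
    exact SGMaux.posdef_everywhere θ M hMp.1 hMp.2 hmem x
end

section
/- The little parameter space Θ^lit = {θ ∈ ℝ^U : Σ_{u∈U} |θ_u| u_j² ≤ 1 for all j = 1, …, m} is contained in the feasible region Θ; that is, if Σ_{u∈U} |θ_u| u_j² ≤ 1 for every coordinate j, then D²ψ(x|θ) is positive semidefinite for every x ∈ [0,1]^m. -/
open Real

namespace SGM

/-- The sign ±1 attached to a boolean. -/
noncomputable def sgn (b : Bool) : ℝ := if b then 1 else -1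

/-- The continuous linear functional x ↦ ∑ j, w j * x j. -/
noncomputable def lf {m : ℕ} (w : Fin m → ℝ) : (Fin m → ℝ) →L[ℝ] ℝ :=
  ∑ j, w j • (ContinuousLinearMap.proj j : (Fin m → ℝ) →L[ℝ] ℝ)

lemma lf_apply {m : ℕ} (w x : Fin m → ℝ) : lf w x = ∑ j, w j * x j := by
  simp [lf]

lemma lf_single {m : ℕ} (w : Fin m → ℝ) (j : Fin m) : lf w (Pi.single j 1) = w j := by
  rw [lf_apply]
  simp [Pi.single_apply, mul_ite, Finset.sum_ite_eq]

/-- Product-to-sum formula for a product of cosines. -/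
lemma sum_cos : ∀ (m : ℕ) (a : Fin m → ℝ),
    (∑ ε : Fin m → Bool, Real.cos (∑ j, sgn (ε j) * a j)) = 2 ^ m * ∏ j, Real.cos (a j)
  | 0, a => by simp
  | (n+1), a => by
    rw [← Fintype.sum_equiv (Fin.consEquiv (fun _ : Fin (n+1) => Bool))
      (fun p => Real.cos (∑ j, sgn ((Fin.consEquiv (fun _ => Bool)) p j) * a j))
      (fun ε => Real.cos (∑ j, sgn (ε j) * a j)) (fun p => rfl)]
    rw [Fintype.sum_prod_type]
    have key : ∀ (b : Bool) (ε : Fin n → Bool),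
        (∑ j, sgn ((Fin.consEquiv (fun _ => Bool)) (b, ε) j) * a j)
          = sgn b * a 0 + ∑ j : Fin n, sgn (ε j) * a j.succ := by
      intro b ε
      rw [Fin.sum_univ_succ]
      rfl
    simp only [key]
    rw [Fintype.sum_bool]
    have htf : ∀ S : ℝ, Real.cos (sgn true * a 0 + S) + Real.cos (sgn false * a 0 + S)
        = 2 * Real.cos (a 0) * Real.cos S := by
      intro S
      have h1 : sgn true * a 0 + S = a 0 + S := by simp [sgn]
      have h2 : sgn false * a 0 + S = -(a 0 - S) := by simp [sgn]; ring
      rw [h1, h2, Real.cos_neg, Real.cos_add, Real.cos_sub]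
      ring
    rw [← Finset.sum_add_distrib]
    simp only [htf]
    rw [← Finset.mul_sum, sum_cos n (fun j => a j.succ), Fin.prod_univ_succ]
    ring

/-- Averaging over all sign patterns kills the cross terms of the square. -/
lemma sum_sq : ∀ (m : ℕ) (b : Fin m → ℝ),
    (∑ ε : Fin m → Bool, (∑ j, sgn (ε j) * b j) ^ 2) = 2 ^ m * ∑ j, b j ^ 2
  | 0, b => by simp
  | (n+1), b => by
    rw [← Fintype.sum_equiv (Fin.consEquiv (fun _ : Fin (n+1) => Bool))
      (fun p => (∑ j, sgn ((Fin.consEquiv (fun _ => Bool)) p j) * b j) ^ 2)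
      (fun ε => (∑ j, sgn (ε j) * b j) ^ 2) (fun p => rfl)]
    rw [Fintype.sum_prod_type]
    have key : ∀ (s : Bool) (ε : Fin n → Bool),
        (∑ j, sgn ((Fin.consEquiv (fun _ => Bool)) (s, ε) j) * b j)
          = sgn s * b 0 + ∑ j : Fin n, sgn (ε j) * b j.succ := by
      intro s ε
      rw [Fin.sum_univ_succ]
      rfl
    simp only [key]
    rw [Fintype.sum_bool]
    rw [← Finset.sum_add_distrib]
    have htf : ∀ S : ℝ, (sgn true * b 0 + S) ^ 2 + (sgn false * b 0 + S) ^ 2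
        = 2 * b 0 ^ 2 + 2 * S ^ 2 := by
      intro S; simp [sgn]; ring
    simp only [htf]
    rw [Finset.sum_add_distrib, ← Finset.mul_sum, ← Finset.mul_sum,
      sum_sq n (fun j => b j.succ), Fin.sum_univ_succ, Finset.sum_const]
    simp [Finset.card_univ]
    ring

/-- The signed frequency vector. -/
noncomputable def wv {m : ℕ} (u : Fin m → ℕ) (ε : Fin m → Bool) : Fin m → ℝ :=
  fun j => sgn (ε j) * (u j : ℝ)

/-- The potential rewritten as a sum of cosines of linear forms. -/
noncomputable def G (m : ℕ) (U : Finset (Fin m → ℕ)) (θ : U → ℝ) (x : Fin m → ℝ) : ℝ :=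
  (1 / 2) * ∑ j, x j ^ 2 -
    ∑ u : U, ∑ ε : Fin m → Bool,
      (θ u / Real.pi ^ 2 / 2 ^ m) * Real.cos (π * lf (wv (u : Fin m → ℕ) ε) x)

lemma sgm_eq_G (m : ℕ) (U : Finset (Fin m → ℕ)) (θ : U → ℝ) :
    sgmPotential m U θ = G m U θ := by
  funext x
  unfold sgmPotential G
  congr 1
  refine Finset.sum_congr rfl fun u _ => ?_
  have h1 : ∀ ε : Fin m → Bool,
      (∑ j, sgn (ε j) * (Real.pi * ((u : Fin m → ℕ) j : ℝ) * x j))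
        = π * lf (wv (u : Fin m → ℕ) ε) x := by
    intro ε
    rw [lf_apply, Finset.mul_sum]
    exact Finset.sum_congr rfl fun j _ => by unfold wv; ring
  have h2 := sum_cos m (fun j => Real.pi * ((u : Fin m → ℕ) j : ℝ) * x j)
  simp only [h1] at h2
  have h2m : (2 : ℝ) ^ m ≠ 0 := by positivity
  have h3 : (∏ j, Real.cos (Real.pi * ((u : Fin m → ℕ) j : ℝ) * x j))
      = (∑ ε : Fin m → Bool, Real.cos (π * lf (wv (u : Fin m → ℕ) ε) x)) / 2 ^ m := by
    rw [h2]; field_simp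
  have h4 : ∀ c : ℝ, θ u / π ^ 2 * (c / 2 ^ m) = θ u / π ^ 2 / 2 ^ m * c :=
    fun c => by ring
  rw [h3, h4 _, Finset.mul_sum]

lemma hasFDerivAt_cos_term {m : ℕ} (w : Fin m → ℝ) (c : ℝ) (x : Fin m → ℝ) :
    HasFDerivAt (fun y : Fin m → ℝ => c * Real.cos (π * lf w y))
      ((c * (-Real.sin (π * lf w x) * π)) • lf w) x := by
  have h1 : HasFDerivAt (fun y : Fin m → ℝ => π * lf w y) (π • lf w) x :=
    (lf w).hasFDerivAt.const_mul π
  have h2 := h1.cos.const_mul c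
  refine h2.congr_fderiv ?_
  rw [smul_smul, smul_smul, mul_assoc]

lemma hasFDerivAt_sin_term {m : ℕ} (w : Fin m → ℝ) (c : ℝ) (x : Fin m → ℝ) :
    HasFDerivAt (fun y : Fin m → ℝ => c * Real.sin (π * lf w y))
      ((c * (Real.cos (π * lf w x) * π)) • lf w) x := by
  have h1 : HasFDerivAt (fun y : Fin m → ℝ => π * lf w y) (π • lf w) x :=
    (lf w).hasFDerivAt.const_mul π
  have h2 := h1.sin.const_mul c
  refine h2.congr_fderiv ?_
  rw [smul_smul, smul_smul, mul_assoc]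

lemma hasFDerivAt_quad {m : ℕ} (x : Fin m → ℝ) :
    HasFDerivAt (fun y : Fin m → ℝ => (1/2 : ℝ) * ∑ j, y j ^ 2) (lf x) x := by
  have h : ∀ j ∈ Finset.univ, HasFDerivAt (fun y : Fin m → ℝ => y j ^ 2)
      (x j • (ContinuousLinearMap.proj j : (Fin m → ℝ) →L[ℝ] ℝ)
        + x j • ContinuousLinearMap.proj j) x := by
    intro j _
    have hp := (ContinuousLinearMap.proj (R := ℝ) (φ := fun _ : Fin m => ℝ) j).hasFDerivAt (x := x)
    have := hp.mul hp
    refine this.congr_of_eventuallyEq (Filter.Eventually.of_forall fun y => ?_)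
    show y j ^ 2 = y j * y j
    ring
  have hsum := (HasFDerivAt.fun_sum h).const_mul (1/2 : ℝ)
  refine hsum.congr_fderiv ?_
  ext v
  simp only [ContinuousLinearMap.smul_apply, ContinuousLinearMap.sum_apply,
    ContinuousLinearMap.add_apply, ContinuousLinearMap.proj_apply, lf_apply,
    smul_eq_mul]
  rw [Finset.mul_sum]
  exact Finset.sum_congr rfl fun j _ => by ring

variable {m : ℕ} {U : Finset (Fin m → ℕ)} {θ : U → ℝ}

lemma hasFDerivAt_G (x : Fin m → ℝ) :
    HasFDerivAt (G m U θ)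
      (lf x - ∑ u : U, ∑ ε : Fin m → Bool,
        ((θ u / Real.pi ^ 2 / 2 ^ m)
          * (-Real.sin (π * lf (wv (u : Fin m → ℕ) ε) x) * π)) • lf (wv (u : Fin m → ℕ) ε)) x := by
  exact (hasFDerivAt_quad x).sub
    (HasFDerivAt.fun_sum fun u _ => HasFDerivAt.fun_sum fun ε _ => hasFDerivAt_cos_term _ _ x)

lemma fderiv_G_single (x : Fin m → ℝ) (j : Fin m) :
    fderiv ℝ (G m U θ) x (Pi.single j 1) =
      x j + ∑ u : U, ∑ ε : Fin m → Bool,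
        ((θ u / Real.pi ^ 2 / 2 ^ m) * π * wv (u : Fin m → ℕ) ε j)
          * Real.sin (π * lf (wv (u : Fin m → ℕ) ε) x) := by
  rw [(hasFDerivAt_G x).fderiv]
  simp only [ContinuousLinearMap.sub_apply, ContinuousLinearMap.sum_apply,
    ContinuousLinearMap.smul_apply, smul_eq_mul, lf_single]
  rw [sub_eq_add_neg, ← Finset.sum_neg_distrib]
  congr 1
  refine Finset.sum_congr rfl fun u _ => ?_
  rw [← Finset.sum_neg_distrib]
  exact Finset.sum_congr rfl fun ε _ => by ring

lemma hessian_G_entry (x : Fin m → ℝ) (i j : Fin m) :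
    hessian m (G m U θ) x i j =
      (if j = i then (1:ℝ) else 0) + ∑ u : U, ∑ ε : Fin m → Bool,
        (θ u / 2 ^ m) * Real.cos (π * lf (wv (u : Fin m → ℕ) ε) x)
          * (wv (u : Fin m → ℕ) ε i * wv (u : Fin m → ℕ) ε j) := by
  have hfun : (fun y => fderiv ℝ (G m U θ) y (Pi.single j 1)) =
      (fun y : Fin m → ℝ => y j + ∑ u : U, ∑ ε : Fin m → Bool,
        ((θ u / Real.pi ^ 2 / 2 ^ m) * π * wv (u : Fin m → ℕ) ε j)
          * Real.sin (π * lf (wv (u : Fin m → ℕ) ε) y)) :=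
    funext fun y => fderiv_G_single y j
  have hP : HasFDerivAt (fun y : Fin m → ℝ => y j + ∑ u : U, ∑ ε : Fin m → Bool,
        ((θ u / Real.pi ^ 2 / 2 ^ m) * π * wv (u : Fin m → ℕ) ε j)
          * Real.sin (π * lf (wv (u : Fin m → ℕ) ε) y))
      ((ContinuousLinearMap.proj j : (Fin m → ℝ) →L[ℝ] ℝ)
        + ∑ u : U, ∑ ε : Fin m → Bool,
          (((θ u / Real.pi ^ 2 / 2 ^ m) * π * wv (u : Fin m → ℕ) ε j)
            * (Real.cos (π * lf (wv (u : Fin m → ℕ) ε) x) * π)) • lf (wv (u : Fin m → ℕ) ε)) x := by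
    exact ((ContinuousLinearMap.proj (R := ℝ) (φ := fun _ : Fin m => ℝ) j).hasFDerivAt).add
      (HasFDerivAt.fun_sum fun u _ => HasFDerivAt.fun_sum fun ε _ => hasFDerivAt_sin_term _ _ x)
  show fderiv ℝ (fun y => fderiv ℝ (G m U θ) y (Pi.single j 1)) x (Pi.single i 1) = _
  rw [hfun, hP.fderiv]
  simp only [ContinuousLinearMap.add_apply, ContinuousLinearMap.sum_apply,
    ContinuousLinearMap.smul_apply, smul_eq_mul, lf_single,
    ContinuousLinearMap.proj_apply, Pi.single_apply]
  congr 1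
  refine Finset.sum_congr rfl fun u _ => Finset.sum_congr rfl fun ε _ => ?_
  have hπ : (π : ℝ) ≠ 0 := Real.pi_ne_zero
  field_simp

lemma hessian_G_posSemidef (x : Fin m → ℝ)
    (hθ : ∀ j : Fin m, ∑ u : U, |θ u| * ((u : Fin m → ℕ) j : ℝ) ^ 2 ≤ 1) :
    (hessian m (G m U θ) x).PosSemidef := by
  refine Matrix.PosSemidef.of_dotProduct_mulVec_nonneg ?_ ?_
  · -- Hermitian
    ext i j
    rw [Matrix.conjTranspose_apply, star_trivial, hessian_G_entry, hessian_G_entry]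
    congr 1
    · simp [eq_comm]
    · exact Finset.sum_congr rfl fun u _ => Finset.sum_congr rfl fun ε _ => by ring
  · intro v
    rw [star_trivial]
    -- compute the quadratic form
    have hquad : dotProduct v ((hessian m (G m U θ) x).mulVec v)
        = (∑ i, v i ^ 2) + ∑ u : U, ∑ ε : Fin m → Bool,
            (θ u / 2 ^ m) * Real.cos (π * lf (wv (u : Fin m → ℕ) ε) x)
              * (∑ i, v i * wv (u : Fin m → ℕ) ε i) ^ 2 := by
      unfold dotProduct Matrix.mulVec
      simp only [hessian_G_entry, dotProduct]
      have step1 : ∀ i : Fin m, (∑ j, ((if j = i then (1:ℝ) else 0) + ∑ u : U, ∑ ε : Fin m → Bool,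
          (θ u / 2 ^ m) * Real.cos (π * lf (wv (u : Fin m → ℕ) ε) x)
            * (wv (u : Fin m → ℕ) ε i * wv (u : Fin m → ℕ) ε j)) * v j)
          = v i + ∑ u : U, ∑ ε : Fin m → Bool,
            (θ u / 2 ^ m) * Real.cos (π * lf (wv (u : Fin m → ℕ) ε) x)
              * wv (u : Fin m → ℕ) ε i * (∑ j, v j * wv (u : Fin m → ℕ) ε j) := by
        intro i
        simp only [add_mul, Finset.sum_add_distrib, ite_mul, one_mul, zero_mul,
          Finset.sum_ite_eq, Finset.sum_ite_eq', Finset.mem_univ, if_true]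
        congr 1
        simp only [Finset.sum_mul]
        rw [Finset.sum_comm]
        refine Finset.sum_congr rfl fun u _ => ?_
        rw [Finset.sum_comm]
        refine Finset.sum_congr rfl fun ε _ => ?_
        rw [Finset.mul_sum]
        exact Finset.sum_congr rfl fun j _ => by ring
      simp only [step1, mul_add, Finset.sum_add_distrib]
      congr 1
      · exact Finset.sum_congr rfl fun i _ => by ring
      · simp only [Finset.mul_sum]
        rw [Finset.sum_comm]
        refine Finset.sum_congr rfl fun u _ => ?_
        rw [Finset.sum_comm]
        refine Finset.sum_congr rfl fun ε _ => ?_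
        set c := (θ u / 2 ^ m) * Real.cos (π * lf (wv (u : Fin m → ℕ) ε) x) with hc
        have h1 : ∀ i : Fin m, (∑ j, v i * (c * wv (u : Fin m → ℕ) ε i * (v j * wv (u : Fin m → ℕ) ε j)))
            = (c * (v i * wv (u : Fin m → ℕ) ε i)) * ∑ j, v j * wv (u : Fin m → ℕ) ε j := by
          intro i
          rw [Finset.mul_sum]
          exact Finset.sum_congr rfl fun j _ => by ring
        rw [Finset.sum_congr rfl fun i _ => h1 i, ← Finset.sum_mul, ← Finset.mul_sum, sq]
        ring
    rw [hquad]
    -- bound the perturbation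
    set Q := ∑ u : U, ∑ ε : Fin m → Bool,
        (θ u / 2 ^ m) * Real.cos (π * lf (wv (u : Fin m → ℕ) ε) x)
          * (∑ i, v i * wv (u : Fin m → ℕ) ε i) ^ 2 with hQ
    have h2m : (0:ℝ) < 2 ^ m := by positivity
    have hbound : |Q| ≤ ∑ i, v i ^ 2 := by
      calc |Q| ≤ ∑ u : U, ∑ ε : Fin m → Bool,
          (|θ u| / 2 ^ m) * (∑ i, v i * wv (u : Fin m → ℕ) ε i) ^ 2 := by
            refine (Finset.abs_sum_le_sum_abs _ _).trans (Finset.sum_le_sum fun u _ => ?_)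
            refine (Finset.abs_sum_le_sum_abs _ _).trans (Finset.sum_le_sum fun ε _ => ?_)
            have h2abs : |(2:ℝ) ^ m| = 2 ^ m := abs_of_pos h2m
            rw [abs_mul, abs_mul, abs_div, h2abs, abs_pow, sq_abs]
            have h1 : |Real.cos (π * lf (wv (u : Fin m → ℕ) ε) x)| ≤ 1 := Real.abs_cos_le_one _
            have h2 : (0:ℝ) ≤ |θ u| / (2:ℝ) ^ m := by positivity
            calc |θ u| / (2:ℝ)^m * |Real.cos (π * lf (wv (u : Fin m → ℕ) ε) x)|
                  * (∑ i, v i * wv (u : Fin m → ℕ) ε i) ^ 2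
                ≤ |θ u| / (2:ℝ)^m * 1 * (∑ i, v i * wv (u : Fin m → ℕ) ε i) ^ 2 := by
                  apply mul_le_mul_of_nonneg_right (mul_le_mul_of_nonneg_left h1 h2) (sq_nonneg _)
              _ = |θ u| / 2 ^ m * (∑ i, v i * wv (u : Fin m → ℕ) ε i) ^ 2 := by ring
        _ = ∑ u : U, |θ u| * ∑ j, (((u : Fin m → ℕ) j : ℝ) * v j) ^ 2 := by
            refine Finset.sum_congr rfl fun u _ => ?_
            have hre : ∀ ε : Fin m → Bool, (∑ i, v i * wv (u : Fin m → ℕ) ε i)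
                = ∑ i, sgn (ε i) * (((u : Fin m → ℕ) i : ℝ) * v i) := by
              intro ε
              exact Finset.sum_congr rfl fun i _ => by unfold wv; ring
            rw [← Finset.mul_sum]
            simp only [hre]
            rw [sum_sq m (fun i => ((u : Fin m → ℕ) i : ℝ) * v i)]
            field_simp
        _ = ∑ j, (∑ u : U, |θ u| * ((u : Fin m → ℕ) j : ℝ) ^ 2) * v j ^ 2 := by
            simp only [Finset.mul_sum]
            rw [Finset.sum_comm]
            refine Finset.sum_congr rfl fun j _ => ?_
            rw [Finset.sum_mul]
            refine Finset.sum_congr rfl fun u _ => by ring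
        _ ≤ ∑ j, 1 * v j ^ 2 := by
            refine Finset.sum_le_sum fun j _ => ?_
            exact mul_le_mul_of_nonneg_right (hθ j) (sq_nonneg _)
        _ = ∑ i, v i ^ 2 := by simp
    have := neg_abs_le Q
    linarith

end SGM

/-- The little parameter space Θ^lit is contained in the feasible region Θ: if
Σ_{u∈U} |θ_u| u_j² ≤ 1 for every coordinate j, then D²ψ(x|θ) is positive semidefinite
for every x ∈ [0,1]^m. -/
theorem little_parameter_space_subset_feasible (m : ℕ) (hm : 0 < m)
    (U : Finset (Fin m → ℕ)) (θ : U → ℝ)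
    (hθ : ∀ j : Fin m, ∑ u : U, |θ u| * ((u : Fin m → ℕ) j : ℝ) ^ 2 ≤ 1) :
    ∀ x ∈ Set.Icc (0 : Fin m → ℝ) 1,
      (hessian m (sgmPotential m U θ) x).PosSemidef := by
  intro x _
  rw [SGM.sgm_eq_G m U θ]
  exact SGM.hessian_G_posSemidef x hθ
end

section
/- Suppose a subset V ⊂ U is linearly independent modulo 2, i.e. the linear map ℓ : {0,1}^V → (ℤ/2ℤ)^m defined by ℓ(ε) = Σ_{u∈V} ε_u u (mod 2) has kernel {0}. Then Θ^lit ∩ ℝ_V = Θ ∩ ℝ_V, where ℝ_V = {θ ∈ ℝ^U : θ_u = 0 for all u ∉ V}. In particular, if U itself is linearly independent modulo 2, then Θ^lit = Θ. -/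
open Real

open Matrix

noncomputable def sgn (b : Bool) : ℝ := if b then 1 else -1

lemma prod_cos_eq (n : ℕ) (a : Fin n → ℝ) :
    (2:ℝ)^n * ∏ j, Real.cos (a j) = ∑ σ : Fin n → Bool, Real.cos (∑ j, sgn (σ j) * a j) := by
  induction n with
  | zero => simp
  | succ n ih =>
    rw [Fin.prod_univ_succ]
    rw [← (Fin.consEquiv fun _ : Fin (n+1) => Bool).sum_comp]
    rw [Fintype.sum_prod_type]
    rw [Fintype.sum_bool]
    have key : ∀ (b : Bool) (τ : Fin n → Bool),
        (∑ j : Fin (n+1), sgn (((Fin.consEquiv fun _ : Fin (n+1) => Bool) (b, τ)) j) * a j)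
          = sgn b * a 0 + ∑ j : Fin n, sgn (τ j) * a j.succ := by
      intro b τ
      rw [Fin.sum_univ_succ]
      simp [Fin.consEquiv]
    simp only [key]
    have ihs := ih (fun j => a j.succ)
    have expand : ∀ S : ℝ, Real.cos (sgn true * a 0 + S) + Real.cos (sgn false * a 0 + S)
        = 2 * Real.cos (a 0) * Real.cos S := by
      intro S
      norm_num [sgn, Real.cos_add, Real.cos_neg, Real.sin_neg]
      ring
    calc (2:ℝ)^(n+1) * (Real.cos (a 0) * ∏ j : Fin n, Real.cos (a j.succ))
        = 2 * Real.cos (a 0) * ((2:ℝ)^n * ∏ j : Fin n, Real.cos (a j.succ)) := by ring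
      _ = 2 * Real.cos (a 0) * ∑ σ : Fin n → Bool, Real.cos (∑ j : Fin n, sgn (σ j) * a j.succ) := by rw [ihs]
      _ = ∑ σ : Fin n → Bool, (2 * Real.cos (a 0) * Real.cos (∑ j : Fin n, sgn (σ j) * a j.succ)) := by rw [Finset.mul_sum]
      _ = _ := by
        rw [← Finset.sum_add_distrib]
        exact Finset.sum_congr rfl fun τ _ => (expand _).symm

lemma sum_sq_sgn (n : ℕ) (b : Fin n → ℝ) :
    ∑ σ : Fin n → Bool, (∑ j, sgn (σ j) * b j)^2 = (2:ℝ)^n * ∑ j, (b j)^2 := by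
  induction n with
  | zero => simp
  | succ n ih =>
    rw [← (Fin.consEquiv fun _ : Fin (n+1) => Bool).sum_comp, Fintype.sum_prod_type, Fintype.sum_bool]
    have key : ∀ (c : Bool) (τ : Fin n → Bool),
        (∑ j : Fin (n+1), sgn (((Fin.consEquiv fun _ : Fin (n+1) => Bool) (c, τ)) j) * b j)
          = sgn c * b 0 + ∑ j : Fin n, sgn (τ j) * b j.succ := by
      intro c τ
      rw [Fin.sum_univ_succ]
      simp [Fin.consEquiv]
    simp only [key]
    have expand : ∀ S : ℝ, (sgn true * b 0 + S)^2 + (sgn false * b 0 + S)^2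
        = 2 * (b 0)^2 + 2 * S^2 := by
      intro S; norm_num [sgn]; ring
    rw [← Finset.sum_add_distrib]
    simp only [expand]
    rw [Finset.sum_add_distrib, Finset.sum_const]
    have : ∑ x : Fin n → Bool, 2 * (∑ j : Fin n, sgn (x j) * b j.succ) ^ 2
        = 2 * ((2:ℝ)^n * ∑ j : Fin n, (b j.succ)^2) := by
      rw [← Finset.mul_sum, ih (fun j => b j.succ)]
    rw [this, Fin.sum_univ_succ]
    simp [Finset.card_univ]
    ring


noncomputable def wt (m : ℕ) (u : Fin m → ℕ) (σ : Fin m → Bool) (k : Fin m) : ℝ :=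
  sgn (σ k) * (Real.pi * (u k : ℝ))

noncomputable def prj (m : ℕ) (j : Fin m) : (Fin m → ℝ) →L[ℝ] ℝ :=
  ContinuousLinearMap.proj j

lemma prj_apply (m : ℕ) (j : Fin m) (y : Fin m → ℝ) : prj m j y = y j := rfl

noncomputable def lmap (m : ℕ) (w : Fin m → ℝ) : (Fin m → ℝ) →L[ℝ] ℝ :=
  ∑ k, w k • prj m k

lemma lmap_apply (m : ℕ) (w : Fin m → ℝ) (y : Fin m → ℝ) :
    lmap m w y = ∑ k, w k * y k := by
  simp [lmap, prj]

lemma lmap_single (m : ℕ) (w : Fin m → ℝ) (i : Fin m) :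
    lmap m w (Pi.single i 1) = w i := by
  rw [lmap_apply]
  rw [Finset.sum_eq_single i] <;> simp +contextual [Pi.single_apply]

lemma surj_of_indep {K : Type*} [Field K] {m : ℕ} (A : Type*) [Fintype A] [DecidableEq A]
    (v : A → Fin m → K)
    (h : ∀ ε : A → K, (∀ j, (∑ a, ε a * v a j) = 0) → ε = 0) :
    ∀ c : A → K, ∃ x : Fin m → K, ∀ a, (∑ j, v a j * x j) = c a := by
  classical
  -- S : (A → K) →ₗ (Fin m → K)
  let S : (A → K) →ₗ[K] (Fin m → K) :=
    { toFun := fun ε j => ∑ a, ε a * v a j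
      map_add' := by intro ε η; funext j; simp [add_mul, Finset.sum_add_distrib]
      map_smul' := by intro c ε; funext j; simp [Finset.mul_sum, mul_assoc] }
  have hS : Function.Injective S := by
    rw [injective_iff_map_eq_zero]
    intro ε hε
    exact h ε (fun j => congrFun hε j)
  have hsurj := LinearMap.dualMap_surjective_of_injective hS
  intro c
  -- target functional g : Dual (A → K)
  let g : Module.Dual K (A → K) :=
    { toFun := fun y => ∑ a, y a * c a
      map_add' := by intro y z; simp [add_mul, Finset.sum_add_distrib]
      map_smul' := by intro r y; simp [Finset.mul_sum, mul_assoc] }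
  obtain ⟨ξ, hξ⟩ := hsurj g
  refine ⟨fun j => ξ (Pi.single j 1), fun a => ?_⟩
  have h1 : S.dualMap ξ (Pi.single a 1) = g (Pi.single a 1) := by rw [hξ]
  have h2 : g (Pi.single a 1) = c a := by
    simp [g, Pi.single_apply]
  have h3 : S.dualMap ξ (Pi.single a 1) = ξ (fun j => v a j) := by
    simp only [LinearMap.dualMap_apply]
    congr 1
    funext j
    simp [S, Pi.single_apply]
  rw [h3, h2] at h1
  rw [← h1]
  rw [LinearMap.pi_apply_eq_sum_univ ξ (fun j => v a j)]
  refine Finset.sum_congr rfl fun j _ => ?_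
  have e : (fun j_1 => if j = j_1 then (1:K) else 0) = Pi.single j 1 := by
    funext k; simp [Pi.single_apply, eq_comm]
  rw [e, smul_eq_mul, mul_comm]

lemma sgm_eq (m : ℕ) (U : Finset (Fin m → ℕ)) (θ : U → ℝ) :
    sgmPotential m U θ = fun x =>
      (1 / 2) * ∑ j, x j ^ 2 -
        ∑ u : U, ∑ σ : Fin m → Bool,
          (θ u / (2 ^ m * Real.pi ^ 2)) * Real.cos (lmap m (wt m u σ) x) := by
  funext x
  unfold sgmPotential
  congr 1
  refine Finset.sum_congr rfl fun u _ => ?_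
  have hp := prod_cos_eq m (fun j => Real.pi * ((u : Fin m → ℕ) j : ℝ) * x j)
  have h2 : (0:ℝ) < 2 ^ m := by positivity
  have harg : ∀ σ : Fin m → Bool,
      (∑ j, sgn (σ j) * (Real.pi * ((u : Fin m → ℕ) j : ℝ) * x j))
        = lmap m (wt m u σ) x := by
    intro σ
    rw [lmap_apply]
    exact Finset.sum_congr rfl fun k _ => by rw [wt]; ring
  have : (∏ j, Real.cos (Real.pi * ((u : Fin m → ℕ) j : ℝ) * x j))
      = (2:ℝ)⁻¹ ^ m * ∑ σ : Fin m → Bool, Real.cos (lmap m (wt m u σ) x) := by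
    rw [← Finset.sum_congr rfl fun σ _ => congrArg Real.cos (harg σ), ← hp]
    field_simp
    rw [mul_assoc, ← mul_pow]; norm_num
  rw [this, ← Finset.mul_sum, ← mul_assoc]
  congr 1
  have hπ : Real.pi ≠ 0 := Real.pi_ne_zero
  rw [div_mul_eq_mul_div, div_eq_div_iff (by positivity) (by positivity)]
  rw [inv_pow]
  field_simp

lemma hasFDerivAt_sgm (m : ℕ) (U : Finset (Fin m → ℕ)) (θ : U → ℝ) (y : Fin m → ℝ) :
    HasFDerivAt (sgmPotential m U θ)
      (lmap m y - ∑ u : U, ∑ σ : Fin m → Bool,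
        ((θ u / (2 ^ m * Real.pi ^ 2)) * (-Real.sin (lmap m (wt m u σ) y)))
          • lmap m (wt m u σ)) y := by
  rw [sgm_eq]
  have hq0 : ∀ j : Fin m, HasFDerivAt (fun z : Fin m → ℝ => z j ^ 2)
      ((((2:ℕ):ℝ) * y j ^ (2-1)) • prj m j) y :=
    fun j => by have := (hasDerivAt_pow 2 (y j)).comp_hasFDerivAt y ((prj m j).hasFDerivAt); exact this
  have hq1 : HasFDerivAt (fun z : Fin m → ℝ => ∑ j, z j ^ 2)
      (∑ j, (((2:ℕ):ℝ) * y j ^ (2-1)) • prj m j) y :=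
    HasFDerivAt.fun_sum fun j _ => hq0 j
  have hq2 := hq1.const_mul (1/2 : ℝ)
  have heq : ((1:ℝ)/2) • (∑ j, (((2:ℕ):ℝ) * y j ^ (2-1)) • prj m j)
      = lmap m y := by
    refine ContinuousLinearMap.ext fun v => ?_
    simp [lmap, prj, Finset.mul_sum]
    exact Finset.sum_congr rfl fun j _ => by ring
  rw [heq] at hq2
  have hc : ∀ (w : Fin m → ℝ) (c : ℝ), HasFDerivAt
      (fun z : Fin m → ℝ => c * Real.cos (lmap m w z))
      ((c * (-Real.sin (lmap m w y))) • lmap m w) y := by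
    intro w c
    have h := (Real.hasDerivAt_cos (lmap m w y)).comp_hasFDerivAt y (lmap m w).hasFDerivAt
    have h2 := h.const_mul c
    rwa [smul_smul] at h2
  exact hq2.sub (HasFDerivAt.fun_sum fun u _ => HasFDerivAt.fun_sum fun σ _ => hc _ _)

lemma fderiv_sgm_single (m : ℕ) (U : Finset (Fin m → ℕ)) (θ : U → ℝ) (y : Fin m → ℝ)
    (j : Fin m) :
    fderiv ℝ (sgmPotential m U θ) y (Pi.single j 1)
      = y j + ∑ u : U, ∑ σ : Fin m → Bool,
          (θ u / (2 ^ m * Real.pi ^ 2)) * wt m u σ j * Real.sin (lmap m (wt m u σ) y) := by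
  rw [(hasFDerivAt_sgm m U θ y).fderiv]
  simp only [ContinuousLinearMap.coe_sub', Pi.sub_apply, ContinuousLinearMap.coe_sum',
    Finset.sum_apply, ContinuousLinearMap.coe_smul', Pi.smul_apply, lmap_single, smul_eq_mul]
  rw [sub_eq_add_neg, ← Finset.sum_neg_distrib]
  congr 1
  refine Finset.sum_congr rfl fun u _ => ?_
  rw [← Finset.sum_neg_distrib]
  exact Finset.sum_congr rfl fun σ _ => by ring

lemma hessian_sgm_apply (m : ℕ) (U : Finset (Fin m → ℕ)) (θ : U → ℝ) (x : Fin m → ℝ)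
    (i j : Fin m) :
    hessian m (sgmPotential m U θ) x i j
      = (if j = i then (1:ℝ) else 0) + ∑ u : U, ∑ σ : Fin m → Bool,
          (θ u / (2 ^ m * Real.pi ^ 2)) * wt m u σ j * wt m u σ i
            * Real.cos (lmap m (wt m u σ) x) := by
  have hinner : (fun y => fderiv ℝ (sgmPotential m U θ) y (Pi.single j 1))
      = fun y => y j + ∑ u : U, ∑ σ : Fin m → Bool,
          (θ u / (2 ^ m * Real.pi ^ 2)) * wt m u σ j * Real.sin (lmap m (wt m u σ) y) :=
    funext fun y => fderiv_sgm_single m U θ y j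
  have hsin : ∀ (w : Fin m → ℝ) (c : ℝ), HasFDerivAt
      (fun z : Fin m → ℝ => c * Real.sin (lmap m w z))
      ((c * Real.cos (lmap m w x)) • lmap m w) x := by
    intro w c
    have h := (Real.hasDerivAt_sin (lmap m w x)).comp_hasFDerivAt x (lmap m w).hasFDerivAt
    have h2 := h.const_mul c
    rwa [smul_smul] at h2
  have hF : HasFDerivAt
      (fun y => y j + ∑ u : U, ∑ σ : Fin m → Bool,
        (θ u / (2 ^ m * Real.pi ^ 2)) * wt m u σ j * Real.sin (lmap m (wt m u σ) y))
      (prj m j + ∑ u : U, ∑ σ : Fin m → Bool,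
        ((θ u / (2 ^ m * Real.pi ^ 2)) * wt m u σ j * Real.cos (lmap m (wt m u σ) x))
          • lmap m (wt m u σ)) x := by
    refine HasFDerivAt.add ((prj m j).hasFDerivAt)
      (HasFDerivAt.fun_sum fun u _ => HasFDerivAt.fun_sum fun σ _ => ?_)
    have := hsin (wt m u σ) ((θ u / (2 ^ m * Real.pi ^ 2)) * wt m u σ j)
    convert this using 2 <;> ring
  show fderiv ℝ (fun y => fderiv ℝ (sgmPotential m U θ) y (Pi.single j 1)) x (Pi.single i 1) = _
  rw [hinner, hF.fderiv]
  simp only [ContinuousLinearMap.add_apply, ContinuousLinearMap.coe_sum',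
    Finset.sum_apply, ContinuousLinearMap.coe_smul', Pi.smul_apply, lmap_single, smul_eq_mul,
    prj_apply, Pi.single_apply]
  congr 1
  refine Finset.sum_congr rfl fun u _ => Finset.sum_congr rfl fun σ _ => by ring

lemma quad_expand {ι κ : Type*} [Fintype ι] [DecidableEq ι] [Fintype κ]
    (v : ι → ℝ) (d : κ → ℝ) (w : κ → ι → ℝ) :
    ∑ i, v i * (∑ k, ((if k = i then (1:ℝ) else 0) + ∑ a, d a * w a k * w a i) * v k)
      = ∑ i, v i ^ 2 + ∑ a, d a * (∑ i, w a i * v i) ^ 2 := by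
  have inner : ∀ i, (∑ k, ((if k = i then (1:ℝ) else 0) + ∑ a, d a * w a k * w a i) * v k)
      = v i + ∑ a, d a * w a i * ∑ k, w a k * v k := by
    intro i
    simp only [add_mul, ite_mul, one_mul, zero_mul, Finset.sum_mul, Finset.sum_add_distrib]
    congr 1
    · simpa using Finset.sum_ite_eq' Finset.univ i v
    · rw [Finset.sum_comm]
      refine Finset.sum_congr rfl fun a _ => ?_
      rw [Finset.mul_sum]
      exact Finset.sum_congr rfl fun k _ => by ring
  simp only [inner, mul_add, Finset.sum_add_distrib, Finset.mul_sum]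
  congr 1
  · exact Finset.sum_congr rfl fun i _ => by ring
  · rw [Finset.sum_comm]
    refine Finset.sum_congr rfl fun a _ => ?_
    have e1 : ∀ x, ∑ i, v x * (d a * w a x * (w a i * v i))
        = (d a * (w a x * v x)) * ∑ i, w a i * v i := by
      intro x
      rw [Finset.mul_sum]
      exact Finset.sum_congr rfl fun i _ => by ring
    simp only [e1]
    rw [← Finset.sum_mul, ← Finset.mul_sum, sq]
    ring

lemma hessian_sgm_quad (m : ℕ) (U : Finset (Fin m → ℕ)) (θ : U → ℝ) (x : Fin m → ℝ)
    (v : Fin m → ℝ) :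
    v ⬝ᵥ (hessian m (sgmPotential m U θ) x).mulVec v
      = ∑ i, v i ^ 2 + ∑ a : U × (Fin m → Bool),
          (θ a.1 / (2 ^ m * Real.pi ^ 2)) * Real.cos (lmap m (wt m a.1 a.2) x)
            * (∑ i, wt m a.1 a.2 i * v i) ^ 2 := by
  have hentry : ∀ i k : Fin m, hessian m (sgmPotential m U θ) x i k
      = (if k = i then (1:ℝ) else 0) + ∑ a : U × (Fin m → Bool),
          ((θ a.1 / (2 ^ m * Real.pi ^ 2)) * Real.cos (lmap m (wt m a.1 a.2) x))
            * wt m a.1 a.2 k * wt m a.1 a.2 i := by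
    intro i k
    rw [hessian_sgm_apply, Fintype.sum_prod_type]
    congr 1
    exact Finset.sum_congr rfl fun u _ => Finset.sum_congr rfl fun σ _ => by ring
  have : v ⬝ᵥ (hessian m (sgmPotential m U θ) x).mulVec v
      = ∑ i, v i * (∑ k, ((if k = i then (1:ℝ) else 0) + ∑ a : U × (Fin m → Bool),
          ((θ a.1 / (2 ^ m * Real.pi ^ 2)) * Real.cos (lmap m (wt m a.1 a.2) x))
            * wt m a.1 a.2 k * wt m a.1 a.2 i) * v k) := by
    simp only [dotProduct, Matrix.mulVec, hentry]
  rw [this, quad_expand]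

lemma wt_sq (m : ℕ) (u : Fin m → ℕ) (σ : Fin m → Bool) (j : Fin m) :
    wt m u σ j ^ 2 = Real.pi ^ 2 * ((u j : ℝ)) ^ 2 := by
  rcases Bool.dichotomy (σ j) with h | h <;> simp [wt, sgn, h] <;> ring

lemma hessian_sgm_herm (m : ℕ) (U : Finset (Fin m → ℕ)) (θ : U → ℝ) (x : Fin m → ℝ) :
    (hessian m (sgmPotential m U θ) x).IsHermitian := by
  refine Matrix.ext fun i j => ?_
  rw [Matrix.conjTranspose_apply, star_trivial, hessian_sgm_apply, hessian_sgm_apply]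
  congr 1
  · by_cases h : i = j <;> simp [h, eq_comm]
  · exact Finset.sum_congr rfl fun u _ => Finset.sum_congr rfl fun σ _ => by ring

lemma psd_of_little (m : ℕ) (U : Finset (Fin m → ℕ)) (θ : U → ℝ)
    (h1 : ∀ j : Fin m, ∑ u : U, |θ u| * ((u : Fin m → ℕ) j : ℝ) ^ 2 ≤ 1)
    (x : Fin m → ℝ) : (hessian m (sgmPotential m U θ) x).PosSemidef := by
  refine Matrix.PosSemidef.of_dotProduct_mulVec_nonneg (hessian_sgm_herm m U θ x) fun v => ?_
  have hsv : star v = v := funext fun i => star_trivial _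
  rw [hsv]
  rw [show (hessian m (sgmPotential m U θ) x) *ᵥ v
      = (hessian m (sgmPotential m U θ) x).mulVec v from rfl]
  rw [hessian_sgm_quad]
  set T := ∑ a : U × (Fin m → Bool),
      (θ a.1 / (2 ^ m * Real.pi ^ 2)) * Real.cos (lmap m (wt m a.1 a.2) x)
        * (∑ i, wt m a.1 a.2 i * v i) ^ 2 with hT
  have habs : |T| ≤ ∑ i, v i ^ 2 := by
    have step1 : |T| ≤ ∑ a : U × (Fin m → Bool),
        |θ a.1| / (2 ^ m * Real.pi ^ 2) * (∑ i, wt m a.1 a.2 i * v i) ^ 2 := by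
      refine (Finset.abs_sum_le_sum_abs _ _).trans (Finset.sum_le_sum fun a _ => ?_)
      rw [abs_mul, abs_mul]
      have hpos : (0:ℝ) < 2 ^ m * Real.pi ^ 2 := by positivity
      have hd : |θ a.1 / (2 ^ m * Real.pi ^ 2)| = |θ a.1| / (2 ^ m * Real.pi ^ 2) := by
        rw [abs_div, abs_of_pos hpos]
      rw [hd, abs_pow, sq_abs]
      have hc : |Real.cos (lmap m (wt m a.1 a.2) x)| ≤ 1 := Real.abs_cos_le_one _
      have h0 : (0:ℝ) ≤ |θ a.1| / (2 ^ m * Real.pi ^ 2) := by positivity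
      have habs0 : (0:ℝ) ≤ |Real.cos (lmap m (wt m a.1 a.2) x)| := abs_nonneg _
      nlinarith [sq_nonneg (∑ i, wt m (a.1 : Fin m → ℕ) a.2 i * v i),
        mul_le_mul_of_nonneg_left hc h0]
    have step2 : ∑ a : U × (Fin m → Bool),
        |θ a.1| / (2 ^ m * Real.pi ^ 2) * (∑ i, wt m a.1 a.2 i * v i) ^ 2
        = ∑ u : U, |θ u| * ∑ i, ((u : Fin m → ℕ) i : ℝ) ^ 2 * v i ^ 2 := by
      rw [Fintype.sum_prod_type]
      refine Finset.sum_congr rfl fun u _ => ?_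
      have harg : ∀ σ : Fin m → Bool, (∑ i, wt m u σ i * v i)
          = ∑ i, sgn (σ i) * (Real.pi * ((u : Fin m → ℕ) i : ℝ) * v i) := by
        intro σ
        exact Finset.sum_congr rfl fun i _ => by rw [wt]; ring
      have hsq : ∑ σ : Fin m → Bool, (∑ i, wt m u σ i * v i) ^ 2
          = (2:ℝ)^m * ∑ i, (Real.pi * ((u : Fin m → ℕ) i : ℝ) * v i) ^ 2 := by
        rw [Finset.sum_congr rfl fun σ _ => by rw [harg σ]]
        exact sum_sq_sgn m _
      have hbeta : ∀ σ : Fin m → Bool,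
          |θ (u, σ).1| / (2 ^ m * Real.pi ^ 2)
              * (∑ i, wt m (↑(u, σ).1 : Fin m → ℕ) (u, σ).2 i * v i) ^ 2
            = |θ u| / (2 ^ m * Real.pi ^ 2) * (∑ i, wt m u σ i * v i) ^ 2 := fun σ => rfl
      rw [Finset.sum_congr rfl fun σ _ => hbeta σ, ← Finset.mul_sum, hsq]
      have hπ : Real.pi ≠ 0 := Real.pi_ne_zero
      have : ∑ i, (Real.pi * ((u : Fin m → ℕ) i : ℝ) * v i) ^ 2
          = Real.pi ^ 2 * ∑ i, ((u : Fin m → ℕ) i : ℝ) ^ 2 * v i ^ 2 := by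
        rw [Finset.mul_sum]
        exact Finset.sum_congr rfl fun i _ => by ring
      rw [this]
      field_simp
    have step3 : ∑ u : U, |θ u| * ∑ i, ((u : Fin m → ℕ) i : ℝ) ^ 2 * v i ^ 2
        ≤ ∑ i, v i ^ 2 := by
      have swap : ∑ u : U, |θ u| * ∑ i, ((u : Fin m → ℕ) i : ℝ) ^ 2 * v i ^ 2
          = ∑ i, v i ^ 2 * ∑ u : U, |θ u| * ((u : Fin m → ℕ) i : ℝ) ^ 2 := by
        simp only [Finset.mul_sum]
        rw [Finset.sum_comm]
        exact Finset.sum_congr rfl fun i _ =>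
          Finset.sum_congr rfl fun u _ => by ring
      rw [swap]
      refine Finset.sum_le_sum fun i _ => ?_
      calc v i ^ 2 * ∑ u : U, |θ u| * ((u : Fin m → ℕ) i : ℝ) ^ 2
          ≤ v i ^ 2 * 1 := by
            refine mul_le_mul_of_nonneg_left (h1 i) (sq_nonneg _)
        _ = v i ^ 2 := mul_one _
    calc |T| ≤ _ := step1
      _ = _ := step2
      _ ≤ _ := step3
  have := neg_abs_le T
  linarith

lemma neg_one_pow_cast_one (N : ℕ) (h : (N : ZMod 2) = 1) : (-1:ℝ)^N = -1 := by
  have : ¬ (2 ∣ N) := by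
    intro hd
    rw [(ZMod.natCast_eq_zero_iff N 2).mpr hd] at h
    exact one_ne_zero h.symm
  exact Odd.neg_one_pow (Nat.odd_iff.mpr (by omega))

lemma neg_one_pow_cast_zero (N : ℕ) (h : (N : ZMod 2) = 0) : (-1:ℝ)^N = 1 := by
  have : 2 ∣ N := (ZMod.natCast_eq_zero_iff N 2).mp h
  exact Even.neg_one_pow (Nat.even_iff.mpr (by omega))

lemma cos_sum_nat (m : ℕ) (u : Fin m → ℕ) (n : Fin m → ℕ) :
    ∑ σ : Fin m → Bool, Real.cos (lmap m (wt m u σ) (fun k => (n k : ℝ)))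
      = 2^m * (-1:ℝ)^(∑ k, u k * n k) := by
  have harg : ∀ σ : Fin m → Bool,
      lmap m (wt m u σ) (fun k => (n k : ℝ))
        = ∑ k, sgn (σ k) * (Real.pi * (u k : ℝ) * (n k : ℝ)) := by
    intro σ
    rw [lmap_apply]
    exact Finset.sum_congr rfl fun k _ => by rw [wt]; ring
  rw [Finset.sum_congr rfl fun σ _ => by rw [harg σ]]
  rw [← prod_cos_eq m (fun k => Real.pi * (u k : ℝ) * (n k : ℝ))]
  congr 1
  have hcos : ∀ k, Real.cos (Real.pi * (u k : ℝ) * (n k : ℝ)) = (-1:ℝ)^(u k * n k) := by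
    intro k
    have : Real.pi * (u k : ℝ) * (n k : ℝ) = ((u k * n k : ℕ) : ℝ) * Real.pi - 0 := by
      push_cast; ring
    rw [this, Real.cos_nat_mul_pi_sub, Real.cos_zero, mul_one]
  rw [Finset.prod_congr rfl fun k _ => hcos k, Finset.prod_pow_eq_pow_sum]

lemma little_of_psd (m : ℕ) (U V : Finset (Fin m → ℕ)) (hVU : V ⊆ U)
    (hV : ∀ ε : V → ZMod 2,
      (∀ j : Fin m, (∑ u : V, ε u * ((u : Fin m → ℕ) j : ZMod 2)) = 0) → ε = 0)
    (θ : U → ℝ) (hz : ∀ u : U, (u : Fin m → ℕ) ∉ V → θ u = 0)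
    (hpsd : ∀ x ∈ Set.Icc (0 : Fin m → ℝ) 1, (hessian m (sgmPotential m U θ) x).PosSemidef)
    (j : Fin m) : ∑ u : U, |θ u| * ((u : Fin m → ℕ) j : ℝ) ^ 2 ≤ 1 := by
  haveI : Fact (Nat.Prime 2) := ⟨Nat.prime_two⟩
  obtain ⟨x', hx'⟩ := surj_of_indep (K := ZMod 2) (m := m) {v // v ∈ V}
    (fun a k => ((a : Fin m → ℕ) k : ZMod 2))
    (fun ε hε => hV ε (fun k => hε k))
    (fun a => if 0 < θ ⟨a.1, hVU a.2⟩ then 1 else 0)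
  set n : Fin m → ℕ := fun k => (x' k).val with hn
  set x : Fin m → ℝ := fun k => (n k : ℝ) with hxdef
  have hx : x ∈ Set.Icc (0 : Fin m → ℝ) 1 := by
    constructor <;> intro k
    · positivity
    · have := ZMod.val_lt (x' k)
      have h1 : n k ≤ 1 := by simp only [hn]; omega
      calc x k = (n k : ℝ) := rfl
        _ ≤ (1 : ℕ) := by exact_mod_cast h1
        _ = (1 : Fin m → ℝ) k := by norm_num
  have hp := (hpsd x hx).dotProduct_mulVec_nonneg (Pi.single j 1)
  have hsv : star (Pi.single j 1 : Fin m → ℝ) = Pi.single j 1 := funext fun i => star_trivial _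
  rw [hsv] at hp
  rw [show (hessian m (sgmPotential m U θ) x) *ᵥ (Pi.single j 1)
      = (hessian m (sgmPotential m U θ) x).mulVec (Pi.single j 1) from rfl] at hp
  rw [hessian_sgm_quad] at hp
  have hsq1 : ∑ i, (Pi.single j 1 : Fin m → ℝ) i ^ 2 = 1 := by
    have : ∀ i, (Pi.single j 1 : Fin m → ℝ) i ^ 2 = if i = j then 1 else 0 := by
      intro i
      rcases eq_or_ne i j with h | h <;> simp [Pi.single_apply, h]
    rw [Finset.sum_congr rfl fun i _ => this i]
    simp
  have hws : ∀ (u : Fin m → ℕ) (σ : Fin m → Bool),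
      (∑ i, wt m u σ i * (Pi.single j 1 : Fin m → ℝ) i) = wt m u σ j := by
    intro u σ
    rw [← lmap_apply, lmap_single]
  rw [hsq1] at hp
  rw [Finset.sum_congr rfl fun (a : U × (Fin m → Bool)) _ => by rw [hws a.1 a.2]] at hp
  rw [Fintype.sum_prod_type] at hp
  -- per-u evaluation
  have hterm : ∀ u : U,
      (∑ σ : Fin m → Bool, (θ u / (2 ^ m * Real.pi ^ 2))
          * Real.cos (lmap m (wt m u σ) x) * (wt m u σ j) ^ 2)
        = -(|θ u| * ((u : Fin m → ℕ) j : ℝ) ^ 2) := by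
    intro u
    have hstep : ∀ σ : Fin m → Bool, (θ u / (2 ^ m * Real.pi ^ 2))
          * Real.cos (lmap m (wt m u σ) x) * (wt m u σ j) ^ 2
        = (θ u / (2 ^ m * Real.pi ^ 2)) * (Real.pi ^ 2 * ((u : Fin m → ℕ) j : ℝ) ^ 2)
            * Real.cos (lmap m (wt m u σ) x) := by
      intro σ
      rw [wt_sq]
      ring
    rw [Finset.sum_congr rfl fun σ _ => hstep σ, ← Finset.mul_sum]
    rw [show x = fun k => ((n k : ℕ) : ℝ) from rfl, cos_sum_nat]
    set N : ℕ := ∑ k, (u : Fin m → ℕ) k * n k with hN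
    have hπ : Real.pi ≠ 0 := Real.pi_ne_zero
    have h2m : (2:ℝ)^m ≠ 0 := by positivity
    by_cases huV : (u : Fin m → ℕ) ∈ V
    · have hpar := hx' ⟨(u : Fin m → ℕ), huV⟩
      have hNc : ((N : ℕ) : ZMod 2) = if 0 < θ u then 1 else 0 := by
        have hcast : ∀ k, ((n k : ℕ) : ZMod 2) = x' k := by
          intro k
          simp [hn, ZMod.natCast_val, ZMod.cast_id]
        have : ((N : ℕ) : ZMod 2) = ∑ k, ((u : Fin m → ℕ) k : ZMod 2) * x' k := by
          rw [hN]
          push_cast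
          exact Finset.sum_congr rfl fun k _ => by rw [hcast k]
        rw [this, hpar]
      by_cases hθ : 0 < θ u
      · rw [neg_one_pow_cast_one N (by rw [hNc, if_pos hθ])]
        rw [abs_of_pos hθ]
        field_simp
      · rw [neg_one_pow_cast_zero N (by rw [hNc, if_neg hθ])]
        rw [abs_of_nonpos (not_lt.mp hθ)]
        field_simp
    · rw [hz u huV]
      simp
  rw [Finset.sum_congr rfl fun u _ => hterm u] at hp
  rw [Finset.sum_neg_distrib] at hp
  linarith

/-- If V ⊆ U is linearly independent modulo 2 (the map ε ↦ Σ_{u∈V} ε_u u over ℤ/2ℤ has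
trivial kernel), then the little parameter space and the feasible region coincide on
ℝ_V = {θ : θ_u = 0 for u ∉ V}. -/
theorem little_parameter_space_eq_feasible_on_V (m : ℕ) (hm : 0 < m)
    (U V : Finset (Fin m → ℕ)) (hVU : V ⊆ U)
    (hV : ∀ ε : V → ZMod 2,
      (∀ j : Fin m, (∑ u : V, ε u * ((u : Fin m → ℕ) j : ZMod 2)) = 0) → ε = 0) :
    {θ : U → ℝ |
        (∀ j : Fin m, ∑ u : U, |θ u| * ((u : Fin m → ℕ) j : ℝ) ^ 2 ≤ 1) ∧
        ∀ u : U, (u : Fin m → ℕ) ∉ V → θ u = 0}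
      = {θ : U → ℝ |
          (∀ x ∈ Set.Icc (0 : Fin m → ℝ) 1,
            (hessian m (sgmPotential m U θ) x).PosSemidef) ∧
          ∀ u : U, (u : Fin m → ℕ) ∉ V → θ u = 0} := by
  ext θ
  simp only [Set.mem_setOf_eq]
  constructor
  · rintro ⟨h1, h2⟩
    exact ⟨fun x _ => psd_of_little m U θ h1 x, h2⟩
  · rintro ⟨h1, h2⟩
    exact ⟨little_of_psd m U V hVU hV θ h2 h1, h2⟩
end
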